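/- arXiv:1301.6495 — 12 statements merged into one kernel-verified Lean document; each statement's English description precedes it below -/
import Mathlib

section
/- Let n, m ≥ 0 and a ∈ ℤ, and let M = [n; a + mw] = n·1·ℤ + (a·1 + m·w)·ℤ be the corresponding ℤ-submodule of 𝒪_D; assume M is regular (contains a non-zero-divisor of ℤ × ℤ). Then M is an ideal of 𝒪_D if and only if m ∣ n, m ∣ a (say a = m·b for some b ∈ ℤ), and n ∣ m·b·(b + d) (equivalently, n ∣ m·N(b·1 + w)). -/
/-- The quadratic order `𝒪_D` of square discriminant `D = d²`,
realized as the subring `{(x,y) ∈ ℤ × ℤ : x ≡ y (mod d)}` of `ℤ × ℤ`. -/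
def Od (d : ℤ) : Subring (ℤ × ℤ) where
  carrier := {z | d ∣ z.1 - z.2}
  one_mem' := by simp
  zero_mem' := by simp
  mul_mem' := by
    rintro a b ha hb
    show d ∣ a.1 * b.1 - a.2 * b.2
    have h : a.1 * b.1 - a.2 * b.2 = (a.1 - a.2) * b.1 + a.2 * (b.1 - b.2) := by ring
    rw [h]
    exact dvd_add (ha.mul_right b.1) (hb.mul_left a.2)
  add_mem' := by
    rintro a b ha hb
    show d ∣ a.1 + b.1 - (a.2 + b.2)
    have h : a.1 + b.1 - (a.2 + b.2) = (a.1 - a.2) + (b.1 - b.2) := by ring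
    rw [h]
    exact dvd_add ha hb
  neg_mem' := by
    rintro a ha
    show d ∣ -a.1 - -a.2
    have h : -a.1 - -a.2 = -(a.1 - a.2) := by ring
    rw [h]
    exact ha.neg_right

lemma mem_Od {d : ℤ} {z : ℤ × ℤ} : z ∈ Od d ↔ d ∣ z.1 - z.2 := Iff.rfl

/-- The element `w = (0, d)` of the standard basis of `𝒪_D`. -/
def wd (d : ℤ) : Od d := ⟨(0, d), mem_Od.mpr ⟨-1, by ring⟩⟩


lemma elt_coe (d n a m u v : ℤ) :
    ((u • (n • (1 : Od d)) + v • (a • (1 : Od d) + m • wd d) : Od d) : ℤ × ℤ)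
      = (u*n + v*a, u*n + v*a + v*(m*d)) := by
  simp [wd, Prod.ext_iff, mul_comm]
  ring


/-- Proposition A.7: a regular `ℤ`-submodule `M = [n; a + mw]` of `𝒪_D`
is an ideal if and only if `m ∣ n`, `m ∣ a` (say `a = m·b`), and `n ∣ m·N(b·1 + w) = m·b·(b+d)`. -/
theorem z_module_is_ideal_iff (d : ℤ) (hd : 1 ≤ d) (n m a : ℤ) (hn : 0 ≤ n) (hm : 0 ≤ m)
    (M : Set (Od d))
    (hM : M = {x : Od d | ∃ u v : ℤ,
        x = u • (n • (1 : Od d)) + v • (a • (1 : Od d) + m • wd d)})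
    (hreg : ∃ z ∈ M, ((z : ℤ × ℤ)) ∈ nonZeroDivisors (ℤ × ℤ)) :
    (∀ r : Od d, ∀ x ∈ M, r * x ∈ M) ↔
      (m ∣ n ∧ ∃ b : ℤ, a = m * b ∧ n ∣ m * (b * (b + d))) := by
  have hd0 : d ≠ 0 := by omega
  subst hM
  constructor
  · intro hid
    have he1 : (n • (1 : Od d)) ∈ {x : Od d | ∃ u v : ℤ,
        x = u • (n • (1 : Od d)) + v • (a • (1 : Od d) + m • wd d)} :=
      ⟨1, 0, by simp⟩
    have he2 : (a • (1 : Od d) + m • wd d) ∈ {x : Od d | ∃ u v : ℤ,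
        x = u • (n • (1 : Od d)) + v • (a • (1 : Od d) + m • wd d)} :=
      ⟨0, 1, by simp⟩
    obtain ⟨u1, v1, h1⟩ := hid (wd d) _ he1
    obtain ⟨u2, v2, h2⟩ := hid (wd d) _ he2
    have c1 : ((wd d * (n • (1 : Od d)) : Od d) : ℤ × ℤ) = (u1*n + v1*a, u1*n + v1*a + v1*(m*d)) := by
      rw [h1]; exact elt_coe d n a m u1 v1
    have c2 : ((wd d * (a • (1 : Od d) + m • wd d) : Od d) : ℤ × ℤ)
        = (u2*n + v2*a, u2*n + v2*a + v2*(m*d)) := by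
      rw [h2]; exact elt_coe d n a m u2 v2
    have lc1 : ((0 : ℤ), d * n) = (u1*n + v1*a, u1*n + v1*a + v1*(m*d)) := by
      rw [← c1]; simp [wd, Prod.ext_iff, mul_comm]
    have lc2 : ((0 : ℤ), d * (a + m * d)) = (u2*n + v2*a, u2*n + v2*a + v2*(m*d)) := by
      rw [← c2]; simp [wd, Prod.ext_iff]
    obtain ⟨e11, e12⟩ := Prod.mk.injEq .. ▸ lc1
    obtain ⟨e21, e22⟩ := Prod.mk.injEq .. ▸ lc2
    have hnm : n = v1 * m := by
      have : d * n = d * (v1 * m) := by linarith [e11, e12]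
      exact mul_left_cancel₀ hd0 this
    have hav : a + m * d = v2 * m := by
      have : d * (a + m * d) = d * (v2 * m) := by linarith [e21, e22]
      exact mul_left_cancel₀ hd0 this
    refine ⟨⟨v1, by linarith⟩, v2 - d, by linarith, -u2, ?_⟩
    have : (0:ℤ) = u2 * n + v2 * a := e21
    linear_combination (-v2) * hav - this
  · rintro ⟨⟨c, hc⟩, b, hab, k, hk⟩ r x ⟨u, v, hx⟩
    obtain ⟨y, hy⟩ : ∃ y : ℤ, (r : ℤ × ℤ).2 = (r : ℤ × ℤ).1 + d * y := by
      obtain ⟨y, hy⟩ := r.2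
      exact ⟨-y, by simp at hy ⊢; linarith⟩
    refine ⟨(r : ℤ × ℤ).1 * u - y*u*b - y*v*k, y*u*c + y*v*b + v*(r : ℤ × ℤ).2, ?_⟩
    apply Subtype.ext
    rw [Subring.coe_mul, elt_coe, hx, elt_coe]
    have hr2 := hy
    apply Prod.ext <;> simp only [Prod.fst_mul, Prod.snd_mul] <;>
      rw [hc, hab, hy] <;> linear_combination (-(y*v)) * hk - (y*v*k) * hc
end

section
/- Assume d is squarefree. For x, y ∈ ℚ, the pair z = (x,y) lies in 𝒪_D (i.e., x, y ∈ ℤ and x ≡ y (mod d)) if and only if x + y ∈ ℤ, x·y ∈ ℤ, and there exists v ∈ ℤ such that x + y ≡ 2v (mod d) and x·y ≡ v² (mod d). -/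
/-- Lemma A.2: for squarefree `d`, a pair `z = (x,y)` of rationals lies in
`𝒪_D` iff its trace `x + y` and norm `x·y` are integers `s`, `nn` with `s ≡ 2v (mod d)` and
`nn ≡ v² (mod d)` for some `v ∈ ℤ`. -/
theorem mem_Od_iff_trace_norm (d : ℤ) (hd : 1 ≤ d) (hsf : Squarefree d) (x y : ℚ) :
    (∃ z : Od d, ((z : ℤ × ℤ).1 : ℚ) = x ∧ ((z : ℤ × ℤ).2 : ℚ) = y) ↔
      ∃ s nn : ℤ, x + y = (s : ℚ) ∧ x * y = (nn : ℚ) ∧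
        ∃ v : ℤ, d ∣ s - 2 * v ∧ d ∣ nn - v ^ 2 := by
  constructor
  · rintro ⟨⟨⟨a, b⟩, hz⟩, hx, hy⟩
    rw [mem_Od] at hz
    refine ⟨a + b, a * b, by push_cast [← hx, ← hy]; ring, by push_cast [← hx, ← hy]; ring,
      a, ⟨?_, ?_⟩⟩
    · obtain ⟨k, hk⟩ := hz
      exact ⟨-k, by linear_combination -hk⟩
    · obtain ⟨k, hk⟩ := hz
      exact ⟨-a * k, by linear_combination (-a) * hk⟩
  · rintro ⟨s, nn, hs, hn, v, h1, h2⟩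
    have hroot : ∀ t : ℚ, t = x ∨ t = y → ∃ a : ℤ, (a : ℚ) = t := by
      rintro t ht
      have h : t ^ 2 - s * t + nn = 0 := by
        rw [← hs, ← hn]; rcases ht with rfl | rfl <;> ring
      have hint : IsIntegral ℤ t := by
        refine ⟨Polynomial.X ^ 2 - Polynomial.C s * Polynomial.X + Polynomial.C nn, ?_, ?_⟩
        · monicity!
        · simp [Polynomial.eval₂_eq_eval_map]; simpa using h
      exact IsIntegrallyClosed.isIntegral_iff.mp hint
    obtain ⟨a, ha⟩ := hroot x (Or.inl rfl)
    obtain ⟨b, hb⟩ := hroot y (Or.inr rfl)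
    have hsab : a + b = s := by
      have : ((a + b : ℤ) : ℚ) = (s : ℚ) := by push_cast [ha, hb]; exact hs
      exact_mod_cast this
    have hnab : a * b = nn := by
      have : ((a * b : ℤ) : ℚ) = (nn : ℚ) := by push_cast [ha, hb]; exact hn
      exact_mod_cast this
    -- key divisibilities
    have huw : d ∣ (a - v) + (b - v) := by
      have : (a - v) + (b - v) = s - 2 * v := by rw [← hsab]; ring
      rw [this]; exact h1
    have hmul : d ∣ (a - v) * (b - v) := by
      have : (a - v) * (b - v) = (nn - v ^ 2) - v * (s - 2 * v) := by
        rw [← hsab, ← hnab]; ring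
      rw [this]; exact dvd_sub h2 (h1.mul_left v)
    have hw2 : d ∣ (b - v) ^ 2 := by
      have : (b - v) ^ 2 = (b - v) * ((a - v) + (b - v)) - (a - v) * (b - v) := by ring
      rw [this]; exact dvd_sub (huw.mul_left _) hmul
    have hw : d ∣ b - v := (hsf.dvd_pow_iff_dvd two_ne_zero).mp hw2
    have hab : d ∣ a - b := by
      have : a - b = ((a - v) + (b - v)) - 2 * (b - v) := by ring
      rw [this]; exact dvd_sub huw (hw.mul_left 2)
    exact ⟨⟨(a, b), mem_Od.mpr hab⟩, ha, hb⟩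
end

section
/- Let p ∈ ℤ be a prime number with p ∣ d, and let m, x ∈ 𝒪_D. If (p,p) divides m·x in 𝒪_D and p does not divide N(m), then (p,p) divides x in 𝒪_D. -/
/-- Lemma A.3 (iii): if `p` is a prime with `p ∣ d`, `(p,p) ∣ m·x` in `𝒪_D`
and `p ∤ N(m)`, then `(p,p) ∣ x` in `𝒪_D`. -/
theorem dvd_of_dvd_mul_of_not_dvd_norm (d : ℤ) (hd : 1 ≤ d) (p : ℤ) (hp : Prime p)
    (hpd : p ∣ d) (m x : Od d) (h : (p : Od d) ∣ m * x)
    (hN : ¬ p ∣ (m : ℤ × ℤ).1 * (m : ℤ × ℤ).2) :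
    (p : Od d) ∣ x := by
  obtain ⟨c, hc⟩ := h
  have h1 : (m : ℤ × ℤ).1 * (x : ℤ × ℤ).1 = p * (c : ℤ × ℤ).1 := by
    have := congrArg (fun z : Od d => (z : ℤ × ℤ).1) hc
    simpa using this
  have h2 : (m : ℤ × ℤ).2 * (x : ℤ × ℤ).2 = p * (c : ℤ × ℤ).2 := by
    have := congrArg (fun z : Od d => (z : ℤ × ℤ).2) hc
    simpa using this
  have hm1 : ¬ p ∣ (m : ℤ × ℤ).1 := fun hh => hN (hh.mul_right _)
  have hm2 : ¬ p ∣ (m : ℤ × ℤ).2 := fun hh => hN (hh.mul_left _)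
  have hx1 : p ∣ (x : ℤ × ℤ).1 :=
    ((hp.dvd_mul.mp ⟨_, h1⟩).resolve_left hm1)
  have hx2 : p ∣ (x : ℤ × ℤ).2 :=
    ((hp.dvd_mul.mp ⟨_, h2⟩).resolve_left hm2)
  obtain ⟨a, ha⟩ := hx1
  obtain ⟨b, hb⟩ := hx2
  have hp0 : p ≠ 0 := hp.ne_zero
  have hc1 : (c : ℤ × ℤ).1 = (m : ℤ × ℤ).1 * a := by
    apply mul_left_cancel₀ hp0
    rw [← h1, ha]; ring
  have hc2 : (c : ℤ × ℤ).2 = (m : ℤ × ℤ).2 * b := by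
    apply mul_left_cancel₀ hp0
    rw [← h2, hb]; ring
  have hdm : d ∣ (m : ℤ × ℤ).1 - (m : ℤ × ℤ).2 := m.2
  have hdc : d ∣ (m : ℤ × ℤ).1 * a - (m : ℤ × ℤ).2 * b := by
    have := c.2
    rw [mem_Od, hc1, hc2] at this
    exact this
  have hdx : d ∣ p * (a - b) := by
    have := x.2
    rw [mem_Od, ha, hb] at this
    have e : p * a - p * b = p * (a - b) := by ring
    rwa [e] at this
  have hdm2 : d ∣ (m : ℤ × ℤ).2 * (a - b) := by
    have e : (m : ℤ × ℤ).2 * (a - b) =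
        ((m : ℤ × ℤ).1 * a - (m : ℤ × ℤ).2 * b) - ((m : ℤ × ℤ).1 - (m : ℤ × ℤ).2) * a := by
      ring
    rw [e]
    exact dvd_sub hdc (hdm.mul_right a)
  have hcop : IsCoprime p (m : ℤ × ℤ).2 := (hp.coprime_iff_not_dvd).mpr hm2
  obtain ⟨u, v, huv⟩ := hcop
  have hdab : d ∣ a - b := by
    have e : a - b = u * (p * (a - b)) + v * ((m : ℤ × ℤ).2 * (a - b)) := by
      linear_combination (b - a) * huv
    rw [e]
    exact dvd_add (hdx.mul_left u) (hdm2.mul_left v)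
  refine ⟨⟨(a, b), mem_Od.mpr hdab⟩, ?_⟩
  apply Subtype.ext
  show (x : ℤ × ℤ) = (p, p) * (a, b)
  ext
  · simpa using ha
  · simpa using hb
end

section
/- A prime ideal 𝔭 of 𝒪_D is a maximal ideal if and only if 𝔭 is regular, i.e., 𝔭 contains an element that is not a zero divisor. -/
set_option synthInstance.maxHeartbeats 1000000
set_option maxHeartbeats 1000000


lemma prod_mem_nzd {z : ℤ × ℤ} :
    z ∈ nonZeroDivisors (ℤ × ℤ) ↔ z.1 ≠ 0 ∧ z.2 ≠ 0 := by
  rw [mem_nonZeroDivisors_iff_right]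
  constructor
  · intro h
    constructor
    · intro h1
      have := h (1, 0) (by ext <;> simp [h1])
      simpa using congrArg Prod.fst this
    · intro h2
      have := h (0, 1) (by ext <;> simp [h2])
      simpa using congrArg Prod.snd this
  · rintro ⟨h1, h2⟩ x hx
    have hx1 : x.1 * z.1 = 0 := congrArg Prod.fst hx
    have hx2 : x.2 * z.2 = 0 := congrArg Prod.snd hx
    have : x.1 = 0 := by
      rcases mul_eq_zero.mp hx1 with h | h
      · exact h
      · exact absurd h h1
    have : x.2 = 0 := by
      rcases mul_eq_zero.mp hx2 with h | h
      · exact h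
      · exact absurd h h2
    ext <;> simp_all

/-- Lemma A.4: a prime ideal of `𝒪_D` is maximal iff it is regular,
i.e. contains an element that is not a zero divisor. -/
theorem prime_ideal_maximal_iff_regular (d : ℤ) (hd : 1 ≤ d)
    (P : Ideal (Od d)) (hP : P.IsPrime) :
    P.IsMaximal ↔ ∃ z ∈ P, ((z : ℤ × ℤ)) ∈ nonZeroDivisors (ℤ × ℤ) := by
  constructor
  · intro hmax
    by_contra hno
    push_neg at hno
    have hzero : ∀ z ∈ P, ((z : ℤ × ℤ)).1 = 0 ∨ ((z : ℤ × ℤ)).2 = 0 := by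
      intro z hz
      by_contra hc
      push_neg at hc
      exact hno z hz (prod_mem_nzd.mpr ⟨hc.1, hc.2⟩)
    by_cases hA : ∃ a ∈ P, ((a : ℤ × ℤ)).1 ≠ 0
    · by_cases hB : ∃ b ∈ P, ((b : ℤ × ℤ)).2 ≠ 0
      · obtain ⟨a, ha, ha1⟩ := hA
        obtain ⟨b, hb, hb2⟩ := hB
        have ha2 : ((a : ℤ × ℤ)).2 = 0 := ((hzero a ha).resolve_left ha1)
        have hb1 : ((b : ℤ × ℤ)).1 = 0 := by
          rcases hzero b hb with h | h
          · exact h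
          · exact absurd h hb2
        have hab := P.add_mem ha hb
        rcases hzero _ hab with h | h
        · have : ((a : ℤ × ℤ)).1 + ((b : ℤ × ℤ)).1 = 0 := h
          rw [hb1, add_zero] at this
          exact ha1 this
        · have : ((a : ℤ × ℤ)).2 + ((b : ℤ × ℤ)).2 = 0 := h
          rw [ha2, zero_add] at this
          exact hb2 this
      · -- all elements of P have second coordinate 0
        push_neg at hB
        set π : Od d →+* ℤ := (RingHom.snd ℤ ℤ).comp (Od d).subtype with hπ
        set m : Ideal (Od d) := Ideal.comap π (Ideal.span {(2 : ℤ)}) with hm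
        have hPm : P ≤ m := by
          intro z hz
          show π z ∈ Ideal.span {(2 : ℤ)}
          have : π z = 0 := hB z hz
          rw [this]; exact zero_mem _
        have hmne : m ≠ ⊤ := by
          intro h
          have h1 : (1 : Od d) ∈ m := h ▸ Submodule.mem_top
          have : (2 : ℤ) ∣ 1 := Ideal.mem_span_singleton.mp h1
          norm_num at this
        have hPe : P = m := hmax.eq_of_le hmne hPm
        have h22 : ((2, 2) : ℤ × ℤ) ∈ Od d := mem_Od.mpr (by simp)
        have : (⟨(2, 2), h22⟩ : Od d) ∈ m := by
          show π _ ∈ Ideal.span {(2 : ℤ)}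
          exact Ideal.mem_span_singleton.mpr (by norm_num [hπ])
        have := hB _ (hPe ▸ this)
        norm_num [hπ] at this
    · -- all elements of P have first coordinate 0
      push_neg at hA
      set π : Od d →+* ℤ := (RingHom.fst ℤ ℤ).comp (Od d).subtype with hπ
      set m : Ideal (Od d) := Ideal.comap π (Ideal.span {(2 : ℤ)}) with hm
      have hPm : P ≤ m := by
        intro z hz
        show π z ∈ Ideal.span {(2 : ℤ)}
        have : π z = 0 := hA z hz
        rw [this]; exact zero_mem _
      have hmne : m ≠ ⊤ := by
        intro h
        have h1 : (1 : Od d) ∈ m := h ▸ Submodule.mem_top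
        have : (2 : ℤ) ∣ 1 := Ideal.mem_span_singleton.mp h1
        norm_num at this
      have hPe : P = m := hmax.eq_of_le hmne hPm
      have h22 : ((2, 2) : ℤ × ℤ) ∈ Od d := mem_Od.mpr (by simp)
      have : (⟨(2, 2), h22⟩ : Od d) ∈ m := by
        show π _ ∈ Ideal.span {(2 : ℤ)}
        exact Ideal.mem_span_singleton.mpr (by norm_num [hπ])
      have := hA _ (hPe ▸ this)
      norm_num [hπ] at this
  · rintro ⟨z, hzP, hzreg⟩
    obtain ⟨h1, h2⟩ := prod_mem_nzd.mp hzreg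
    set a : ℤ := ((z : ℤ × ℤ)).1 with haa
    set b : ℤ := ((z : ℤ × ℤ)).2 with hbb
    have hab : d ∣ a - b := z.2
    have hswap : ((b, a) : ℤ × ℤ) ∈ Od d := by
      rw [mem_Od]
      show d ∣ b - a
      rw [← neg_sub]
      exact dvd_neg.mpr hab
    set w : Od d := ⟨(b, a), hswap⟩ with hw
    have hNmem : ((a * b : ℤ) : Od d) ∈ P := by
      have hmul : z * w ∈ P := P.mul_mem_right w hzP
      have : ((a * b : ℤ) : Od d) = z * w := by
        apply Subtype.ext
        show ((a * b : ℤ) : ℤ × ℤ) = ((z : ℤ × ℤ)) * ((b, a) : ℤ × ℤ)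
        ext
        · simp; exact Or.inl rfl
        · simp [mul_comm]; exact Or.inl rfl
      rw [this]
      exact hmul
    set N : ℤ := a * b with hNdef
    have hN0 : N ≠ 0 := mul_ne_zero h1 h2
    set n : ℕ := N.natAbs with hn
    haveI : NeZero n := ⟨Int.natAbs_ne_zero.mpr hN0⟩
    have hnP : ((n : ℤ) : Od d) ∈ P := by
      rcases Int.natAbs_eq N with h | h
      · rw [← h]; exact hNmem
      · have : ((n : ℤ) : Od d) = -((N : ℤ) : Od d) := by
          rw [show ((n : ℤ)) = -N by omega]
          push_cast
          ring
        rw [this]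
        exact P.neg_mem hNmem
    -- the quotient is finite
    
    let mk : Od d →+* (Od d ⧸ P) := Ideal.Quotient.mk P
    have hnQ : ((n : ℤ) : Od d ⧸ P) = 0 := by
      have : mk ((n : ℤ) : Od d) = 0 := Ideal.Quotient.eq_zero_iff_mem.mpr hnP
      rwa [map_intCast] at this
    have hwd : ((d, 0) : ℤ × ℤ) ∈ Od d := mem_Od.mpr (by simp)
    have key : ∀ y : ℤ, ((y : ℤ) : Od d ⧸ P) = (((y : ZMod n).val : ℤ) : Od d ⧸ P) := by
      intro y
      have hdvd : ((n : ℤ)) ∣ y - ((y : ZMod n).val : ℤ) := by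
        rw [← ZMod.intCast_zmod_eq_zero_iff_dvd]
        push_cast
        rw [ZMod.natCast_rightInverse (y : ZMod n)]
        ring
      obtain ⟨t, ht⟩ := hdvd
      have : y = ((y : ZMod n).val : ℤ) + (n : ℤ) * t := by linarith
      calc ((y : ℤ) : Od d ⧸ P) = ((((y : ZMod n).val : ℤ) + (n : ℤ) * t : ℤ) : Od d ⧸ P) := by rw [← this]
        _ = (((y : ZMod n).val : ℤ) : Od d ⧸ P) + ((n : ℤ) : Od d ⧸ P) * ((t : ℤ) : Od d ⧸ P) := by push_cast; ring
        _ = (((y : ZMod n).val : ℤ) : Od d ⧸ P) := by rw [hnQ]; ring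
    haveI : Finite (Od d ⧸ P) := by
      apply Finite.of_surjective (f := fun p : ZMod n × ZMod n =>
        ((p.1.val : ℤ) : Od d ⧸ P) + ((p.2.val : ℤ) : Od d ⧸ P) * mk ⟨(d, 0), hwd⟩)
      intro q
      obtain ⟨zz, rfl⟩ := Ideal.Quotient.mk_surjective q
      obtain ⟨⟨x, y⟩, hzz⟩ := zz
      have hdxy : d ∣ x - y := hzz
      obtain ⟨k, hk⟩ := hdxy
      refine ⟨((y : ZMod n), (k : ZMod n)), ?_⟩
      have hdecomp : (⟨(x, y), hzz⟩ : Od d) = ((y : ℤ) : Od d) + ((k : ℤ) : Od d) * ⟨(d, 0), hwd⟩ := by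
        apply Subtype.ext
        show ((x, y) : ℤ × ℤ) = ((y : ℤ) : ℤ × ℤ) + ((k : ℤ) : ℤ × ℤ) * ((d, 0) : ℤ × ℤ)
        ext
        · simp; linarith [hk, mul_comm k d]
        · simp
      show ((((y : ZMod n)).val : ℤ) : Od d ⧸ P) + ((((k : ZMod n)).val : ℤ) : Od d ⧸ P) * mk ⟨(d, 0), hwd⟩
          = mk ⟨(x, y), hzz⟩
      rw [hdecomp, map_add, map_mul, map_intCast, map_intCast, ← key y, ← key k]
    haveI : P.IsPrime := hP
    have hfield : IsField (Od d ⧸ P) := Finite.isField_of_domain (Od d ⧸ P)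
    exact Ideal.Quotient.maximal_of_isField P hfield
end

section
/- Let p ∈ ℤ be a prime number. Every ideal I of 𝒪_D of norm p (i.e., with 𝒪_D/I having exactly p elements) is of the form [p; a + w] = (p,p)·ℤ + (a, a + d)·ℤ for some a ∈ ℤ with p ∣ a·(a + d). Conversely, every such ℤ-module [p; a + w] with p ∣ a·(a + d) is an ideal of 𝒪_D and is a prime ideal (of norm p). -/
/-- The element `a·1 + w = (a, a + d)` of `𝒪_D`. -/
def awd (d a : ℤ) : Od d := ⟨(a, a + d), mem_Od.mpr ⟨-1, by ring⟩⟩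

set_option linter.unnecessarySeqFocus false

lemma coe_comb (d : ℤ) (p : ℕ) (u v a : ℤ) :
    ((u • (p : Od d) + v • awd d a : Od d) : ℤ × ℤ) = (u*p + v*a, u*p + v*a + v*d) := by
  push_cast [awd]
  ext <;> simp <;> ring

lemma repr_iff (d : ℤ) (p : ℕ) (a : ℤ) (z : Od d) :
    (∃ u v : ℤ, z = u • (p : Od d) + v • awd d a) ↔
    (∃ v : ℤ, (z:ℤ×ℤ).2 - (z:ℤ×ℤ).1 = v * d ∧ (p:ℤ) ∣ (z:ℤ×ℤ).1 - v * a) := by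
  constructor
  · rintro ⟨u, v, rfl⟩
    refine ⟨v, ?_, ⟨u, ?_⟩⟩ <;> rw [coe_comb] <;> ring
  · rintro ⟨v, h1, u, h2⟩
    refine ⟨u, v, Subtype.ext ?_⟩
    rw [coe_comb]
    have : (z:ℤ×ℤ).1 = u * p + v * a := by linarith
    ext
    · exact this
    · simp only []
      omega

lemma memP_iff (d : ℤ) (p : ℕ) (a : ℤ) (z : Od d) :
    (∃ v : ℤ, (z:ℤ×ℤ).2 - (z:ℤ×ℤ).1 = v * d ∧ (p:ℤ) ∣ (z:ℤ×ℤ).1 - v * a) ↔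
    (∃ u v : ℤ, z = u • (p : Od d) + v • awd d a) := (repr_iff d p a z).symm

def Jid (d : ℤ) (p : ℕ) (a : ℤ) (hpa : (p:ℤ) ∣ a * (a + d)) : Ideal (Od d) where
  carrier := {x : Od d | ∃ u v : ℤ, x = u • (p : Od d) + v • awd d a}
  zero_mem' := by
    rw [Set.mem_setOf_eq, ← memP_iff]
    exact ⟨0, by simp⟩
  add_mem' := by
    intro x y hx hy
    rw [Set.mem_setOf_eq, ← memP_iff] at *
    obtain ⟨v, hv, s, hs⟩ := hx
    obtain ⟨v', hv', s', hs'⟩ := hy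
    refine ⟨v + v', ?_, s + s', ?_⟩ <;> push_cast <;> simp only [Prod.fst_add, Prod.snd_add] <;> linarith
  smul_mem' := by
    intro c x hx
    rw [Set.mem_setOf_eq, ← memP_iff] at *
    obtain ⟨v, hv, s, hs⟩ := hx
    obtain ⟨q, hq⟩ := hpa
    obtain ⟨m, hm⟩ := c.2
    set k : ℤ := -m with hk
    have hkd : k * d = -(m * d) := by rw [hk]; ring
    have hc2 : (c:ℤ×ℤ).2 = (c:ℤ×ℤ).1 + k * d := by linarith
    have hcx : ((c • x : Od d) : ℤ×ℤ) = ((c:ℤ×ℤ).1 * (x:ℤ×ℤ).1, (c:ℤ×ℤ).2 * (x:ℤ×ℤ).2) := rfl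
    refine ⟨(c:ℤ×ℤ).1 * v + k * (x:ℤ×ℤ).1 + k * v * d, ?_, ((c:ℤ×ℤ).1 - k*a) * s - k * v * q, ?_⟩
    · rw [hcx]
      simp only []
      have hx2 : (x:ℤ×ℤ).2 = (x:ℤ×ℤ).1 + v * d := by linarith
      rw [hc2, hx2]; ring
    · rw [hcx]
      simp only []
      have hxs : (x:ℤ×ℤ).1 = v * a + p * s := by linarith
      rw [hxs]
      linear_combination (-(k:ℤ) * v) * hq


section phi
variable (d : ℤ) (p : ℕ) (a : ℤ)

/-- the coordinate `t` with `z = x·1 + t·w`. -/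
def tc (z : Od d) : ℤ := ((z:ℤ×ℤ).2 - (z:ℤ×ℤ).1) / d

lemma tc_spec (z : Od d) : (z:ℤ×ℤ).2 = (z:ℤ×ℤ).1 + tc d z * d := by
  have h : d ∣ (z:ℤ×ℤ).2 - (z:ℤ×ℤ).1 := (dvd_sub_comm).mp z.2
  have := Int.ediv_mul_cancel h
  unfold tc
  linarith

lemma tc_eq (hd : d ≠ 0) (z : Od d) (t : ℤ) (h : (z:ℤ×ℤ).2 = (z:ℤ×ℤ).1 + t * d) :
    tc d z = t := by
  have h2 := tc_spec d z
  have : (tc d z - t) * d = 0 := by linarith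
  rcases mul_eq_zero.mp this with h3 | h3
  · linarith
  · exact absurd h3 hd

def phi (hd : d ≠ 0) (hpa : (p:ℤ) ∣ a * (a + d)) : Od d →+* ZMod p where
  toFun z := (((z:ℤ×ℤ).1 : ZMod p)) - (tc d z : ZMod p) * (a : ZMod p)
  map_one' := by
    show (((1 : Od d):ℤ×ℤ).1 : ZMod p) - (tc d 1 : ZMod p) * (a : ZMod p) = 1
    have h1 : ((1 : Od d) : ℤ×ℤ) = (1, 1) := rfl
    have ht : tc d (1 : Od d) = 0 := tc_eq d hd _ 0 (by rw [h1]; ring)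
    rw [ht, h1]
    push_cast
    ring
  map_zero' := by
    show (((0 : Od d):ℤ×ℤ).1 : ZMod p) - (tc d 0 : ZMod p) * (a : ZMod p) = 0
    have h1 : ((0 : Od d) : ℤ×ℤ) = (0, 0) := rfl
    have ht : tc d (0 : Od d) = 0 := tc_eq d hd _ 0 (by rw [h1]; ring)
    rw [ht, h1]
    push_cast
    ring
  map_add' := by
    intro x y
    show (((x + y : Od d):ℤ×ℤ).1 : ZMod p) - (tc d (x+y) : ZMod p) * (a : ZMod p) =
      ((((x : Od d):ℤ×ℤ).1 : ZMod p) - (tc d x : ZMod p) * (a : ZMod p)) +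
      ((((y : Od d):ℤ×ℤ).1 : ZMod p) - (tc d y : ZMod p) * (a : ZMod p))
    have hco : ((x + y : Od d) : ℤ×ℤ) = ((x:ℤ×ℤ).1 + (y:ℤ×ℤ).1, (x:ℤ×ℤ).2 + (y:ℤ×ℤ).2) := rfl
    have ht : tc d (x + y) = tc d x + tc d y := by
      apply tc_eq d hd
      rw [hco]
      have h1 := tc_spec d x
      have h2 := tc_spec d y
      simp only []
      rw [h1, h2]; ring
    rw [ht, hco]
    push_cast
    ring
  map_mul' := by
    intro x y
    show (((x * y : Od d):ℤ×ℤ).1 : ZMod p) - (tc d (x*y) : ZMod p) * (a : ZMod p) =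
      ((((x : Od d):ℤ×ℤ).1 : ZMod p) - (tc d x : ZMod p) * (a : ZMod p)) *
      ((((y : Od d):ℤ×ℤ).1 : ZMod p) - (tc d y : ZMod p) * (a : ZMod p))
    have hco : ((x * y : Od d) : ℤ×ℤ) = ((x:ℤ×ℤ).1 * (y:ℤ×ℤ).1, (x:ℤ×ℤ).2 * (y:ℤ×ℤ).2) := rfl
    have h1 := tc_spec d x
    have h2 := tc_spec d y
    have ht : tc d (x * y) = (x:ℤ×ℤ).1 * tc d y + tc d x * (y:ℤ×ℤ).1 + tc d x * tc d y * d := by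
      apply tc_eq d hd
      rw [hco]
      simp only []
      rw [h1, h2]; ring
    have h0 : ((a * (a + d) : ℤ) : ZMod p) = 0 := by
      rwa [ZMod.intCast_zmod_eq_zero_iff_dvd]
    rw [ht, hco]
    push_cast
    push_cast at h0
    linear_combination (-(tc d x : ZMod p) * (tc d y : ZMod p)) * h0
end phi

lemma phi_surj (d : ℤ) (p : ℕ) (a : ℤ) (hd : d ≠ 0) (hpa : (p:ℤ) ∣ a * (a + d)) :
    Function.Surjective (phi d p a hd hpa) := by
  intro y
  obtain ⟨x, rfl⟩ := ZMod.intCast_surjective y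
  refine ⟨(x : Od d), ?_⟩
  have hco : (((x : ℤ) : Od d) : ℤ×ℤ) = (x, x) := by
    push_cast
    rfl
  show ((((x:Od d)):ℤ×ℤ).1 : ZMod p) - (tc d (x:Od d) : ZMod p) * (a : ZMod p) = (x : ZMod p)
  have ht : tc d ((x:ℤ) : Od d) = 0 := tc_eq d hd _ 0 (by rw [hco]; ring)
  rw [ht, hco]
  push_cast
  ring

lemma ker_phi (d : ℤ) (p : ℕ) (a : ℤ) (hd : d ≠ 0) (hpa : (p:ℤ) ∣ a * (a + d)) :
    RingHom.ker (phi d p a hd hpa) = Jid d p a hpa := by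
  ext z
  rw [RingHom.mem_ker]
  show (((z:ℤ×ℤ).1 : ZMod p)) - (tc d z : ZMod p) * (a : ZMod p) = 0 ↔ _
  have hmem : z ∈ Jid d p a hpa ↔
      ∃ v : ℤ, (z:ℤ×ℤ).2 - (z:ℤ×ℤ).1 = v * d ∧ (p:ℤ) ∣ (z:ℤ×ℤ).1 - v * a :=
    (repr_iff d p a z)
  rw [hmem]
  constructor
  · intro h
    refine ⟨tc d z, by have := tc_spec d z; linarith, ?_⟩
    rw [← ZMod.intCast_zmod_eq_zero_iff_dvd]
    push_cast
    linear_combination h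
  · rintro ⟨v, hv, hdvd⟩
    have htv : tc d z = v := tc_eq d hd _ v (by linarith)
    rw [htv]
    rw [← ZMod.intCast_zmod_eq_zero_iff_dvd] at hdvd
    push_cast at hdvd
    linear_combination hdvd

lemma awd_decomp (d a : ℤ) : awd d a = a • (1 : Od d) + wd d := by
  apply Subtype.ext
  push_cast [awd, wd]
  ext <;> simp

lemma comb2 (d a : ℤ) :
    (a * (a + d)) • (1 : Od d) = (a + d) • awd d a - wd d * awd d a := by
  apply Subtype.ext
  push_cast [awd, wd]
  ext <;> simp <;> ring

lemma z_decomp (d : ℤ) (z : Od d) (t : ℤ) (h : (z:ℤ×ℤ).2 = (z:ℤ×ℤ).1 + t * d) :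
    z = ((z:ℤ×ℤ).1) • (1 : Od d) + t • wd d := by
  apply Subtype.ext
  push_cast [wd]
  ext
  · simp
  · simp
    linarith


set_option synthInstance.maxHeartbeats 1000000 in
set_option maxHeartbeats 2000000 in
/-- Corollary A.8: every ideal of `𝒪_D` of norm a prime `p` is of the form
`[p; a + w] = (p,p)·ℤ + (a, a+d)·ℤ` with `p ∣ a·(a+d) = N(a·1 + w)`; conversely every such
`ℤ`-module is a prime ideal of `𝒪_D` of norm `p`. -/
theorem ideal_of_prime_norm (d : ℤ) (hd : 1 ≤ d) (p : ℕ) (hp : p.Prime) :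
    (∀ I : Ideal (Od d), Nat.card (Od d ⧸ I) = p →
      ∃ a : ℤ, (p : ℤ) ∣ a * (a + d) ∧
        (I : Set (Od d)) = {x : Od d | ∃ u v : ℤ, x = u • (p : Od d) + v • awd d a}) ∧
    (∀ a : ℤ, (p : ℤ) ∣ a * (a + d) →
      ∃ J : Ideal (Od d), J.IsPrime ∧ Nat.card (Od d ⧸ J) = p ∧
        (J : Set (Od d)) = {x : Od d | ∃ u v : ℤ, x = u • (p : Od d) + v • awd d a}) := by
  have hd0 : d ≠ 0 := by omega
  constructor
  · intro I hI
    haveI hfin : Finite (Od d ⧸ I) := Nat.finite_of_card_ne_zero (by rw [hI]; exact hp.pos.ne')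
    have h10 : (1 : Od d ⧸ I) ≠ 0 := by
      intro h
      have h1 : (1 : Od d) ∈ I := by
        rw [← Ideal.Quotient.eq_zero_iff_mem, map_one]
        exact h
      have htop : I = ⊤ := (Ideal.eq_top_iff_one I).mpr h1
      haveI : Subsingleton (Od d ⧸ I) := Ideal.Quotient.subsingleton_iff.mpr htop
      have := Nat.card_of_subsingleton (0 : Od d ⧸ I)
      rw [hI] at this
      exact hp.one_lt.ne' this
    have hord : addOrderOf (1 : Od d ⧸ I) = p := by
      have hdvd := addOrderOf_dvd_natCard (1 : Od d ⧸ I)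
      rw [hI] at hdvd
      rcases hp.eq_one_or_self_of_dvd _ hdvd with h | h
      · exact absurd (AddMonoid.addOrderOf_eq_one_iff.mp h) h10
      · exact h
    have htop : AddSubgroup.zmultiples (1 : Od d ⧸ I) = ⊤ :=
      AddSubgroup.eq_top_of_card_eq _ (by rw [Nat.card_zmultiples, hord, hI])
    obtain ⟨c, hc⟩ := AddSubgroup.mem_zmultiples_iff.mp
      (htop ▸ AddSubgroup.mem_top (Ideal.Quotient.mk I (wd d)))
    have hA : awd d (-c) ∈ I := by
      rw [← Ideal.Quotient.eq_zero_iff_mem, awd_decomp, map_add, map_zsmul, map_one, hc.symm,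
        ← add_zsmul]
      simp
    have hP : ((p : ℕ) : Od d) ∈ I := by
      rw [← Ideal.Quotient.eq_zero_iff_mem, map_natCast]
      have h2 : ((p : ℕ) : Od d ⧸ I) = p • (1 : Od d ⧸ I) := by simp
      rw [h2, ← hord]
      exact addOrderOf_nsmul_eq_zero _
    have hdvdkey : (p : ℤ) ∣ (-c) * (-c + d) := by
      have hmem : ((-c) * (-c + d)) • (1 : Od d) ∈ I := by
        rw [comb2]
        refine sub_mem ?_ (I.mul_mem_left _ hA)
        rw [zsmul_eq_mul]
        exact I.mul_mem_left _ hA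
      have hz : ((-c) * (-c + d) : ℤ) • (1 : Od d ⧸ I) = 0 := by
        rw [← map_one (Ideal.Quotient.mk I), ← map_zsmul]
        exact Ideal.Quotient.eq_zero_iff_mem.mpr hmem
      have := addOrderOf_dvd_iff_zsmul_eq_zero.mpr hz
      rwa [hord] at this
    refine ⟨-c, hdvdkey, ?_⟩
    ext z
    simp only [SetLike.mem_coe, Set.mem_setOf_eq]
    rw [← memP_iff]
    constructor
    · intro hz
      obtain ⟨m, hm⟩ := z.2
      have hmd : (-m) * d = -(m * d) := by ring
      have hz2 : (z:ℤ×ℤ).2 = (z:ℤ×ℤ).1 + (-m) * d := by linarith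
      have hmk : Ideal.Quotient.mk I z = ((z:ℤ×ℤ).1 + (-m) * c) • (1 : Od d ⧸ I) := by
        conv_lhs => rw [z_decomp d z (-m) hz2]
        rw [map_add, map_zsmul, map_zsmul, map_one, hc.symm, ← mul_smul, ← add_smul]
      have h0 : ((z:ℤ×ℤ).1 + (-m) * c) • (1 : Od d ⧸ I) = 0 := by
        rw [← hmk]
        exact Ideal.Quotient.eq_zero_iff_mem.mpr hz
      have hdvd2 : (p : ℤ) ∣ (z:ℤ×ℤ).1 + (-m) * c := by
        have := addOrderOf_dvd_iff_zsmul_eq_zero.mpr h0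
        rwa [hord] at this
      refine ⟨-m, by linarith, ?_⟩
      rw [show (z:ℤ×ℤ).1 - (-m) * (-c) = (z:ℤ×ℤ).1 + (-m) * c from by ring]
      exact hdvd2
    · intro hPz
      obtain ⟨u, v, rfl⟩ := (repr_iff d p (-c) z).mpr hPz
      rw [zsmul_eq_mul, zsmul_eq_mul]
      exact I.add_mem (I.mul_mem_left _ hP) (I.mul_mem_left _ hA)
  · intro a hpa
    refine ⟨Jid d p a hpa, ?_, ?_, rfl⟩
    · rw [← ker_phi d p a hd0 hpa]
      haveI := Fact.mk hp
      exact RingHom.ker_isPrime _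
    · rw [← ker_phi d p a hd0 hpa,
        Nat.card_congr (RingHom.quotientKerEquivOfSurjective (phi_surj d p a hd0 hpa)).toEquiv,
        Nat.card_zmod]
end

section
/- Let p ∈ ℤ be a prime number with p ∣ d. Then the principal ideal (p) = (p,p)·𝒪_D is not a prime ideal of 𝒪_D, but it is irreducible: whenever (p) = I ∩ J for ideals I, J of 𝒪_D, one has I = (p) or J = (p). -/
-- basic coe lemmas
example (d : ℤ) (p : ℕ) : (((p : Od d)) : ℤ × ℤ) = ((p:ℤ), (p:ℤ)) := by push_cast; rfl
example (d u : ℤ) : (((u : Od d)) : ℤ × ℤ) = (u, u) := by push_cast; rfl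
example (d : ℤ) (a b : Od d) : ((a*b : Od d) : ℤ×ℤ).1 = (a:ℤ×ℤ).1 * (b:ℤ×ℤ).1 := by push_cast; rfl

-- membership in span {p} implies divisibility of difference
lemma span_p_dvd {d : ℤ} {p : ℕ} {z : Od d}
    (h : z ∈ Ideal.span {(p : Od d)}) :
    ((p:ℤ)*d) ∣ (z:ℤ×ℤ).1 - (z:ℤ×ℤ).2 ∧ (p:ℤ) ∣ (z:ℤ×ℤ).1 := by
  rw [Ideal.mem_span_singleton] at h
  obtain ⟨c, hc⟩ := h
  obtain ⟨m, hm⟩ := c.2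
  have h1 : (z:ℤ×ℤ).1 = (p:ℤ) * (c:ℤ×ℤ).1 := by rw [hc]; push_cast; rfl
  have h2 : (z:ℤ×ℤ).2 = (p:ℤ) * (c:ℤ×ℤ).2 := by rw [hc]; push_cast; rfl
  constructor
  · exact ⟨m, by rw [h1, h2]; linear_combination (p:ℤ) * hm⟩
  · exact ⟨(c:ℤ×ℤ).1, h1⟩

lemma pd_not_dvd {d : ℤ} (hd : 1 ≤ d) {p : ℕ} (hp : p.Prime) : ¬ ((p:ℤ)*d ∣ d) := by
  rintro ⟨m, hm⟩
  have hd0 : d ≠ 0 := by omega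
  have h1 : (1:ℤ) = p * m := by
    have : d * 1 = d * (p * m) := by linarith [hm]
    exact mul_left_cancel₀ hd0 this
  have h2 : (p:ℤ) ∣ 1 := ⟨m, h1⟩
  have := Int.le_of_dvd one_pos h2
  have := hp.two_le
  omega

lemma wd_not_mem {d : ℤ} (hd : 1 ≤ d) {p : ℕ} (hp : p.Prime) :
    wd d ∉ Ideal.span {(p : Od d)} := by
  intro h
  have := (span_p_dvd h).1
  simp only [wd] at this
  rw [zero_sub, dvd_neg] at this
  exact pd_not_dvd hd hp this

def td (d : ℤ) : Od d := ⟨(d, 0), mem_Od.mpr ⟨1, by ring⟩⟩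

lemma td_not_mem {d : ℤ} (hd : 1 ≤ d) {p : ℕ} (hp : p.Prime) :
    td d ∉ Ideal.span {(p : Od d)} := by
  intro h
  have := (span_p_dvd h).1
  simp only [td] at this
  rw [sub_zero] at this
  exact pd_not_dvd hd hp this

lemma coe_p_mul {d : ℤ} (p : ℕ) (c : Od d) :
    (((p:Od d)*c : Od d) : ℤ×ℤ) = ((p:ℤ)*(c:ℤ×ℤ).1, (p:ℤ)*(c:ℤ×ℤ).2) := by
  push_cast; rfl

lemma key {d : ℤ} (hd : 1 ≤ d) {p : ℕ} (hp : p.Prime) (hpd : (p : ℤ) ∣ d)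
    (I : Ideal (Od d)) (hle : Ideal.span {(p : Od d)} ≤ I)
    (z : Od d) (hz : z ∈ I) (hz' : z ∉ Ideal.span {(p : Od d)}) :
    wd d ∈ I := by
  obtain ⟨k, hk⟩ := z.2
  have hpZ : Prime (p : ℤ) := Nat.prime_iff_prime_int.mp hp
  have hp0 : (p:ℤ) ≠ 0 := by exact_mod_cast hp.ne_zero
  have hpwd : (p : Od d) * wd d ∈ I := hle (Ideal.mul_mem_right _ _ (Ideal.mem_span_singleton_self _))
  by_cases hpy : (p:ℤ) ∣ (z:ℤ×ℤ).2
  · -- p ∣ y, hence p ∣ x; then p ∤ k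
    have hpxy : (p:ℤ) ∣ (z:ℤ×ℤ).1 - (z:ℤ×ℤ).2 := hk ▸ Dvd.dvd.mul_right hpd k
    have hpx : (p:ℤ) ∣ (z:ℤ×ℤ).1 := by
      have := dvd_add hpxy hpy; simpa using this
    have hpk : ¬ (p:ℤ) ∣ k := by
      intro hpk
      apply hz'
      rw [Ideal.mem_span_singleton]
      obtain ⟨a, ha⟩ := hpx
      obtain ⟨b, hb⟩ := hpy
      obtain ⟨m, hm⟩ := hpk
      refine ⟨⟨(a, b), mem_Od.mpr ⟨m, ?_⟩⟩, ?_⟩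
      · apply mul_left_cancel₀ hp0
        have h2 : (p:ℤ)*a - p*b = d * (p*m) := by rw [← ha, ← hb, ← hm]; exact hk
        show (p:ℤ) * (a - b) = _
        linarith [h2]
      · apply Subtype.ext
        rw [coe_p_mul]
        exact Prod.ext ha hb
    obtain ⟨u, v, huv⟩ := (hpZ.coprime_iff_not_dvd.mpr hpk)
    obtain ⟨a, ha⟩ := hpx
    have hx1 : (((z:ℤ×ℤ).1 : ℤ) : Od d) ∈ I := by
      apply hle
      rw [Ideal.mem_span_singleton]
      refine ⟨(a : Od d), Subtype.ext ?_⟩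
      rw [coe_p_mul]
      push_cast
      exact Prod.ext ha ha
    have heq : wd d = (u : Od d) * ((p:Od d) * wd d) + (v : Od d) * ((((z:ℤ×ℤ).1 : ℤ) : Od d) - z) := by
      apply Subtype.ext
      show ((0:ℤ), d) = _
      push_cast
      refine Prod.ext ?_ ?_ <;> simp [wd]
      linear_combination (-d) * huv - v * hk
    rw [heq]
    exact add_mem (Ideal.mul_mem_left _ _ hpwd) (Ideal.mul_mem_left _ _ (sub_mem hx1 hz))
  · obtain ⟨u, v, huv⟩ := (hpZ.coprime_iff_not_dvd.mpr hpy)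
    have heq : wd d = (u : Od d) * ((p:Od d) * wd d) + (v : Od d) * (wd d * z) := by
      apply Subtype.ext
      show ((0:ℤ), d) = _
      push_cast
      refine Prod.ext ?_ ?_ <;> simp [wd]
      linear_combination (-d) * huv
    rw [heq]
    exact add_mem (Ideal.mul_mem_left _ _ hpwd) (Ideal.mul_mem_left _ _ (Ideal.mul_mem_left _ _ hz))

/-- Theorem 2.3/A.10 (ii): for a prime `p ∣ d` the principal ideal `(p)`
of `𝒪_D` is not prime, but it is irreducible: it is not the intersection of two strictly
larger ideals. -/
theorem span_p_irreducible_not_prime (d : ℤ) (hd : 1 ≤ d) (p : ℕ) (hp : p.Prime)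
    (hpd : (p : ℤ) ∣ d) :
    ¬ (Ideal.span {(p : Od d)}).IsPrime ∧
      ∀ I J : Ideal (Od d), Ideal.span {(p : Od d)} = I ⊓ J →
        I = Ideal.span {(p : Od d)} ∨ J = Ideal.span {(p : Od d)} := by
  constructor
  · intro hP
    have hmul : wd d * td d = 0 := by
      apply Subtype.ext
      show ((0:ℤ), d) * ((d:ℤ), (0:ℤ)) = ((0:ℤ), (0:ℤ))
      simp [Prod.ext_iff]
    have h0 : wd d * td d ∈ Ideal.span {(p : Od d)} := hmul ▸ zero_mem _
    rcases hP.mem_or_mem h0 with h | h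
    · exact wd_not_mem hd hp h
    · exact td_not_mem hd hp h
  · intro I J hIJ
    by_contra hcon
    push_neg at hcon
    obtain ⟨hI, hJ⟩ := hcon
    have hleI : Ideal.span {(p : Od d)} ≤ I := hIJ ▸ inf_le_left
    have hleJ : Ideal.span {(p : Od d)} ≤ J := hIJ ▸ inf_le_right
    obtain ⟨zI, hzI, hzI'⟩ := SetLike.not_le_iff_exists.mp
      (fun h => hI (le_antisymm h hleI))
    obtain ⟨zJ, hzJ, hzJ'⟩ := SetLike.not_le_iff_exists.mp
      (fun h => hJ (le_antisymm h hleJ))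
    have wI := key hd hp hpd I hleI zI hzI hzI'
    have wJ := key hd hp hpd J hleJ zJ hzJ hzJ'
    have : wd d ∈ Ideal.span {(p : Od d)} := by
      rw [hIJ]; exact ⟨wI, wJ⟩
    exact wd_not_mem hd hp this
end

section
/- Let 𝔞 be a regular ideal of 𝒪_D (so N(𝔞) is finite and nonzero) with gcd(N(𝔞), d) = 1. Then 𝔞 can be written as a finite product of prime ideals of 𝒪_D, and this factorization is unique up to reordering of the factors (i.e., the multiset of prime ideal factors is uniquely determined by 𝔞). -/
namespace OdAux

variable (d : ℤ)

/-- element constructor -/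
def el (x y : ℤ) (h : d ∣ x - y) : Od d := ⟨(x, y), h⟩

@[simp] lemma el_coe (x y : ℤ) (h : d ∣ x - y) : ((el d x y h : Od d) : ℤ × ℤ) = (x, y) := rfl

/-- diagonal element -/
def diag (n : ℤ) : Od d := ⟨(n, n), mem_Od.mpr (by simp)⟩

@[simp] lemma diag_coe (n : ℤ) : ((diag d n : Od d) : ℤ × ℤ) = (n, n) := rfl

lemma diag_mul (m n : ℤ) : diag d m * diag d n = diag d (m * n) := by
  apply Subtype.ext; rfl

lemma diag_one : diag d 1 = 1 := rfl

/-- The ideal I(a,b) -/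
def Idl (a b : ℤ) : Ideal (Od d) where
  carrier := {z | a ∣ (z : ℤ × ℤ).1 ∧ b ∣ (z : ℤ × ℤ).2}
  zero_mem' := by simp
  add_mem' := by
    rintro x y ⟨hx1, hx2⟩ ⟨hy1, hy2⟩
    refine ⟨?_, ?_⟩
    · show a ∣ ((x : ℤ × ℤ) + (y : ℤ × ℤ)).1
      simpa using dvd_add hx1 hy1
    · show b ∣ ((x : ℤ × ℤ) + (y : ℤ × ℤ)).2
      simpa using dvd_add hx2 hy2
  smul_mem' := by
    rintro c x ⟨hx1, hx2⟩
    refine ⟨?_, ?_⟩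
    · show a ∣ ((c : ℤ × ℤ) * (x : ℤ × ℤ)).1
      simpa using hx1.mul_left _
    · show b ∣ ((c : ℤ × ℤ) * (x : ℤ × ℤ)).2
      simpa using hx2.mul_left _

lemma mem_Idl {a b : ℤ} {z : Od d} :
    z ∈ Idl d a b ↔ a ∣ (z : ℤ × ℤ).1 ∧ b ∣ (z : ℤ × ℤ).2 := Iff.rfl

lemma Idl_one : Idl d 1 1 = ⊤ := by
  ext z; simp [mem_Idl]

lemma exists_k {a b : ℤ} (hb : IsCoprime b d) : ∃ k, d ∣ a - b * k := by
  obtain ⟨u, v, huv⟩ := hb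
  exact ⟨u * a, ⟨v * a, by linear_combination (-a) * huv⟩⟩

end OdAux

namespace OdAux

variable (d : ℤ)

lemma Idl_eq_span {a b k : ℤ} (hb : IsCoprime b d) (hk : d ∣ a - b * k) :
    Idl d a b = Ideal.span {el d a (b * k) hk, el d 0 (b * d) ⟨-b, by ring⟩} := by
  apply le_antisymm
  · intro z hz
    obtain ⟨hz1, hz2⟩ := (mem_Idl d).mp hz
    obtain ⟨m, hm⟩ := hz1
    have hdz : d ∣ (z : ℤ × ℤ).1 - (z : ℤ × ℤ).2 := z.2
    have hbd : b * d ∣ (z : ℤ × ℤ).2 - m * (b * k) := by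
      refine hb.mul_dvd ?_ ?_
      · exact dvd_sub hz2 ⟨m * k, by ring⟩
      · obtain ⟨c, hc⟩ := hdz
        obtain ⟨e, he⟩ := hk
        exact ⟨m * e - c, by linear_combination (-1) * hc + m * he + hm⟩
    obtain ⟨n, hn⟩ := hbd
    rw [Ideal.mem_span_pair]
    refine ⟨diag d m, diag d n, ?_⟩
    apply Subtype.ext
    show ((m, m) : ℤ × ℤ) * (a, b * k) + ((n, n) : ℤ × ℤ) * (0, b * d) = (z : ℤ × ℤ)
    have : (z : ℤ × ℤ) = ((z : ℤ × ℤ).1, (z : ℤ × ℤ).2) := rfl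
    rw [this, Prod.mk_mul_mk, Prod.mk_mul_mk, Prod.mk_add_mk]
    refine Prod.ext ?_ ?_
    · show m * a + n * 0 = (z : ℤ × ℤ).1
      linear_combination -hm
    · show m * (b * k) + n * (b * d) = (z : ℤ × ℤ).2
      linear_combination -hn
  · rw [Ideal.span_le]
    rintro x (rfl | rfl)
    · exact ⟨dvd_refl a, Dvd.intro _ rfl⟩
    · exact ⟨dvd_zero a, Dvd.intro _ rfl⟩

end OdAux

namespace OdAux

variable (d : ℤ)

lemma coprime_of_dvd_sub {a b k : ℤ} (ha : IsCoprime a d) (hk : d ∣ a - b * k) :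
    IsCoprime k d := by
  obtain ⟨m, hm⟩ := hk
  have : IsCoprime (b * k) d := by
    have : b * k = a + d * (-m) := by linear_combination -hm
    rw [this]
    exact ha.add_mul_left_left _
  exact this.of_mul_left_right

lemma Idl_mul_Idl {a b a' b' : ℤ} (ha : IsCoprime a d) (hb : IsCoprime b d)
    (ha' : IsCoprime a' d) (hb' : IsCoprime b' d) :
    Idl d a b * Idl d a' b' = Idl d (a * a') (b * b') := by
  obtain ⟨k, hk⟩ := exists_k d (a := a) hb
  obtain ⟨k', hk'⟩ := exists_k d (a := a') hb'
  have hbb' : IsCoprime (b * b') d := hb.mul_left hb'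
  -- K := k * k' works
  have hK : d ∣ a * a' - (b * b') * (k * k') := by
    obtain ⟨e, he⟩ := hk
    obtain ⟨e', he'⟩ := hk'
    exact ⟨a * e' + b' * k' * e, by linear_combination a * he' + (b' * k') * he⟩
  apply le_antisymm
  · rw [Ideal.mul_le]
    rintro r ⟨hr1, hr2⟩ s ⟨hs1, hs2⟩
    refine ⟨?_, ?_⟩
    · show a * a' ∣ ((r : ℤ × ℤ) * (s : ℤ × ℤ)).1
      simpa using mul_dvd_mul hr1 hs1
    · show b * b' ∣ ((r : ℤ × ℤ) * (s : ℤ × ℤ)).2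
      simpa using mul_dvd_mul hr2 hs2
  · rw [Idl_eq_span d hbb' hK, Ideal.span_le]
    have hα : el d a (b * k) hk ∈ Idl d a b := ⟨dvd_refl a, ⟨k, rfl⟩⟩
    have hα' : el d a' (b' * k') hk' ∈ Idl d a' b' := ⟨dvd_refl a', ⟨k', rfl⟩⟩
    have hβ : el d 0 (b * d) ⟨-b, by ring⟩ ∈ Idl d a b := ⟨dvd_zero a, ⟨d, rfl⟩⟩
    have hβ' : el d 0 (b' * d) ⟨-b', by ring⟩ ∈ Idl d a' b' := ⟨dvd_zero a', ⟨d, rfl⟩⟩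
    set P := Idl d a b * Idl d a' b' with hP
    have h1 : el d a (b * k) hk * el d a' (b' * k') hk' ∈ P := Ideal.mul_mem_mul hα hα'
    have h2 : el d a (b * k) hk * el d 0 (b' * d) ⟨-b', by ring⟩ ∈ P := Ideal.mul_mem_mul hα hβ'
    have h3 : el d 0 (b * d) ⟨-b, by ring⟩ * el d 0 (b' * d) ⟨-b', by ring⟩ ∈ P :=
      Ideal.mul_mem_mul hβ hβ'
    -- (0, b*b'*d) ∈ P
    have hkd : IsCoprime k d := coprime_of_dvd_sub d ha hk
    obtain ⟨u, v, huv⟩ := hkd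
    have hB : el d 0 (b * b' * d) ⟨-(b * b'), by ring⟩ ∈ P := by
      have : el d 0 (b * b' * d) ⟨-(b * b'), by ring⟩ =
          diag d u * (el d a (b * k) hk * el d 0 (b' * d) ⟨-b', by ring⟩) +
          diag d v * (el d 0 (b * d) ⟨-b, by ring⟩ * el d 0 (b' * d) ⟨-b', by ring⟩) := by
        apply Subtype.ext
        show ((0 : ℤ), b * b' * d) =
          ((u, u) : ℤ × ℤ) * (((a, b * k) : ℤ × ℤ) * (0, b' * d)) +
          ((v, v) : ℤ × ℤ) * (((0, b * d) : ℤ × ℤ) * (0, b' * d))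
        rw [Prod.mk_mul_mk, Prod.mk_mul_mk, Prod.mk_mul_mk, Prod.mk_mul_mk, Prod.mk_add_mk]
        refine Prod.ext (by simp) ?_
        show b * b' * d = u * (b * k * (b' * d)) + v * (b * d * (b' * d))
        linear_combination (b * b' * d) * huv.symm
      rw [this]
      exact Submodule.add_mem _ (Ideal.mul_mem_left _ _ h2) (Ideal.mul_mem_left _ _ h3)
    rintro x (rfl | rfl)
    · -- (a*a', b*b'*(k*k')) ∈ P
      have : el d (a * a') (b * b' * (k * k')) hK =
          el d a (b * k) hk * el d a' (b' * k') hk' := by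
        apply Subtype.ext
        show ((a * a', b * b' * (k * k')) : ℤ × ℤ) = ((a, b * k) : ℤ × ℤ) * (a', b' * k')
        rw [Prod.mk_mul_mk]
        exact Prod.ext rfl (by ring)
      rw [this]
      exact h1
    · exact hB

end OdAux

namespace OdAux

variable (d : ℤ)

lemma Idl_prime_left {p : ℤ} (hp : Prime p) : (Idl d p 1).IsPrime := by
  constructor
  · rw [Ideal.ne_top_iff_one]
    rintro ⟨h1, -⟩
    exact hp.not_unit (isUnit_of_dvd_one h1)
  · rintro x y ⟨hxy, -⟩
    have : p ∣ (x : ℤ × ℤ).1 * (y : ℤ × ℤ).1 := by simpa using hxy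
    rcases hp.2.2 _ _ this with h | h
    · exact Or.inl ⟨h, one_dvd _⟩
    · exact Or.inr ⟨h, one_dvd _⟩

lemma Idl_prime_right {p : ℤ} (hp : Prime p) : (Idl d 1 p).IsPrime := by
  constructor
  · rw [Ideal.ne_top_iff_one]
    rintro ⟨-, h1⟩
    exact hp.not_unit (isUnit_of_dvd_one h1)
  · rintro x y ⟨-, hxy⟩
    have : p ∣ (x : ℤ × ℤ).2 * (y : ℤ × ℤ).2 := by simpa using hxy
    rcases hp.2.2 _ _ this with h | h
    · exact Or.inl ⟨one_dvd _, h⟩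
    · exact Or.inr ⟨one_dvd _, h⟩

lemma prime_eq_left {p : ℤ} (hp : Prime p) {P : Ideal (Od d)} (hP : P.IsPrime)
    (hle : Idl d p 1 ≤ P) : P = Idl d p 1 := by
  refine le_antisymm ?_ hle
  intro z hz
  by_contra hz1
  have hz1' : ¬ p ∣ (z : ℤ × ℤ).1 := by
    intro h
    exact hz1 ⟨h, one_dvd _⟩
  have hco : IsCoprime p (z : ℤ × ℤ).1 := hp.coprime_iff_not_dvd.mpr hz1'
  obtain ⟨u, v, huv⟩ := hco
  obtain ⟨c, hc⟩ : d ∣ (z : ℤ × ℤ).1 - (z : ℤ × ℤ).2 := z.2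
  have hpP : diag d p ∈ P := hle ⟨dvd_refl p, one_dvd _⟩
  have hwP : (wd d : Od d) ∈ P := hle ⟨dvd_zero p, one_dvd _⟩
  have h1 : (1 : Od d) = diag d v * z + diag d u * diag d p + diag d (v * c) * wd d := by
    apply Subtype.ext
    show ((1 : ℤ), (1 : ℤ)) =
      ((v, v) : ℤ × ℤ) * ((z : ℤ × ℤ).1, (z : ℤ × ℤ).2) + ((u, u) : ℤ × ℤ) * (p, p) +
      ((v * c, v * c) : ℤ × ℤ) * (0, d)
    rw [Prod.mk_mul_mk, Prod.mk_mul_mk, Prod.mk_mul_mk, Prod.mk_add_mk, Prod.mk_add_mk]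
    refine Prod.ext ?_ ?_
    · show (1 : ℤ) = v * (z : ℤ × ℤ).1 + u * p + v * c * 0
      linear_combination -huv
    · show (1 : ℤ) = v * (z : ℤ × ℤ).2 + u * p + v * c * d
      linear_combination -huv + v * hc
  have : (1 : Od d) ∈ P := by
    rw [h1]
    exact Submodule.add_mem _
      (Submodule.add_mem _ (Ideal.mul_mem_left _ _ hz) (Ideal.mul_mem_left _ _ hpP))
      (Ideal.mul_mem_left _ _ hwP)
  exact hP.ne_top ((Ideal.eq_top_iff_one _).mpr this)

lemma prime_eq_right {p : ℤ} (hp : Prime p) {P : Ideal (Od d)} (hP : P.IsPrime)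
    (hle : Idl d 1 p ≤ P) : P = Idl d 1 p := by
  refine le_antisymm ?_ hle
  intro z hz
  by_contra hz2
  have hz2' : ¬ p ∣ (z : ℤ × ℤ).2 := by
    intro h
    exact hz2 ⟨one_dvd _, h⟩
  have hco : IsCoprime p (z : ℤ × ℤ).2 := hp.coprime_iff_not_dvd.mpr hz2'
  obtain ⟨u, v, huv⟩ := hco
  obtain ⟨c, hc⟩ : d ∣ (z : ℤ × ℤ).1 - (z : ℤ × ℤ).2 := z.2
  have hpP : diag d p ∈ P := hle ⟨one_dvd _, dvd_refl p⟩
  have hwP : el d d 0 ⟨1, by ring⟩ ∈ P := hle ⟨one_dvd _, dvd_zero p⟩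
  have h1 : (1 : Od d) = diag d v * z + diag d u * diag d p +
      diag d (-(v * c)) * el d d 0 ⟨1, by ring⟩ := by
    apply Subtype.ext
    show ((1 : ℤ), (1 : ℤ)) =
      ((v, v) : ℤ × ℤ) * ((z : ℤ × ℤ).1, (z : ℤ × ℤ).2) + ((u, u) : ℤ × ℤ) * (p, p) +
      ((-(v * c), -(v * c)) : ℤ × ℤ) * (d, 0)
    rw [Prod.mk_mul_mk, Prod.mk_mul_mk, Prod.mk_mul_mk, Prod.mk_add_mk, Prod.mk_add_mk]
    refine Prod.ext ?_ ?_
    · show (1 : ℤ) = v * (z : ℤ × ℤ).1 + u * p + -(v * c) * d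
      linear_combination -huv - v * hc
    · show (1 : ℤ) = v * (z : ℤ × ℤ).2 + u * p + -(v * c) * 0
      linear_combination -huv
  have : (1 : Od d) ∈ P := by
    rw [h1]
    exact Submodule.add_mem _
      (Submodule.add_mem _ (Ideal.mul_mem_left _ _ hz) (Ideal.mul_mem_left _ _ hpP))
      (Ideal.mul_mem_left _ _ hwP)
  exact hP.ne_top ((Ideal.eq_top_iff_one _).mpr this)

lemma shape {p : ℤ} (hp : Prime p) (hpd : IsCoprime p d) {P : Ideal (Od d)} (hP : P.IsPrime)
    (hmem : diag d p ∈ P) : P = Idl d p 1 ∨ P = Idl d 1 p := by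
  have hpp : Idl d p p ≤ P := by
    intro z hz
    obtain ⟨⟨x, hx⟩, ⟨y, hy⟩⟩ := hz
    have hdxy : d ∣ x - y := by
      have : d ∣ (z : ℤ × ℤ).1 - (z : ℤ × ℤ).2 := z.2
      rw [hx, hy] at this
      have h2 : d ∣ p * (x - y) := by
        have e : p * x - p * y = p * (x - y) := by ring
        rwa [e] at this
      exact hpd.symm.dvd_of_dvd_mul_left h2
    have : z = diag d p * el d x y hdxy := by
      apply Subtype.ext
      show (z : ℤ × ℤ) = ((p, p) : ℤ × ℤ) * (x, y)
      rw [Prod.mk_mul_mk]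
      exact Prod.ext hx hy
    rw [this]
    exact Ideal.mul_mem_right _ _ hmem
  have hmul : Idl d p 1 * Idl d 1 p ≤ P := by
    rw [Idl_mul_Idl d hpd isCoprime_one_left isCoprime_one_left hpd]
    simpa using hpp
  rcases hP.mul_le.mp hmul with h | h
  · exact Or.inl (prime_eq_left d hp hP h)
  · exact Or.inr (prime_eq_right d hp hP h)

end OdAux

namespace OdAux

variable (d : ℤ)

lemma diag_natCast (n : ℕ) : ((n : Od d)) = diag d (n : ℤ) := by
  apply Subtype.ext
  show ((n : Od d) : ℤ × ℤ) = ((n : ℤ), (n : ℤ))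
  rw [SubringClass.coe_natCast]
  rfl

lemma exists_prime_diag {P : Ideal (Od d)} (hP : P.IsPrime) :
    ∀ n : ℕ, n ≠ 0 → diag d (n : ℤ) ∈ P →
      ∃ p : ℕ, p.Prime ∧ (p : ℤ) ∣ (n : ℤ) ∧ diag d (p : ℤ) ∈ P := by
  intro n
  induction n using Nat.strong_induction_on with
  | _ n ih =>
    intro hn0 hmem
    rcases eq_or_ne n 1 with rfl | hn1
    · exfalso
      apply hP.ne_top
      rw [Ideal.eq_top_iff_one]
      have : diag d ((1 : ℕ) : ℤ) = 1 := rfl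
      rwa [this] at hmem
    · obtain ⟨p, hp, hdvd⟩ := Nat.exists_prime_and_dvd hn1
      obtain ⟨m, hm⟩ := hdvd
      have hmul : diag d (n : ℤ) = diag d (p : ℤ) * diag d (m : ℤ) := by
        rw [diag_mul]
        congr 1
        push_cast [hm]; ring
      rw [hmul] at hmem
      rcases hP.mem_or_mem hmem with h | h
      · refine ⟨p, hp, ?_, h⟩
        exact_mod_cast Int.natCast_dvd_natCast.mpr ⟨m, hm⟩
      · have hm0 : m ≠ 0 := by
          rintro rfl
          simp at hm
          exact hn0 hm
        have hmn : m < n := by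
          have h2 : 2 ≤ p := hp.two_le
          have : 0 < m := Nat.pos_of_ne_zero hm0
          rw [hm]; nlinarith
        obtain ⟨q, hq, hqm, hqP⟩ := ih m hmn hm0 h
        exact ⟨q, hq, hqm.trans (by exact_mod_cast Dvd.intro_left p hm.symm), hqP⟩

lemma prod_le_of_mem {P : Ideal (Od d)} {t : Multiset (Ideal (Od d))} (h : P ∈ t) :
    t.prod ≤ P := by
  induction t using Multiset.induction with
  | empty => simp at h
  | cons Q u ih =>
    rw [Multiset.prod_cons]
    rcases Multiset.mem_cons.mp h with rfl | h'
    · exact Ideal.mul_le_left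
    · exact le_trans Ideal.mul_le_right (ih h')

lemma coprime_prod {m : Multiset ℤ} (h : ∀ p ∈ m, IsCoprime p d) : IsCoprime m.prod d := by
  induction m using Multiset.induction with
  | empty => simpa using isCoprime_one_left
  | cons a s ih =>
    rw [Multiset.prod_cons]
    exact (h a (Multiset.mem_cons_self _ _)).mul_left
      (ih fun p hp => h p (Multiset.mem_cons_of_mem hp))

lemma prod_map_left {m : Multiset ℤ} (h : ∀ p ∈ m, IsCoprime p d) :
    (m.map (fun p => Idl d p 1)).prod = Idl d m.prod 1 := by
  induction m using Multiset.induction with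
  | empty => simp [Idl_one]
  | cons a s ih =>
    rw [Multiset.map_cons, Multiset.prod_cons, Multiset.prod_cons,
      ih fun p hp => h p (Multiset.mem_cons_of_mem hp),
      Idl_mul_Idl d (h a (Multiset.mem_cons_self _ _)) isCoprime_one_left
        (coprime_prod d fun p hp => h p (Multiset.mem_cons_of_mem hp)) isCoprime_one_left,
      mul_one]

lemma prod_map_right {m : Multiset ℤ} (h : ∀ p ∈ m, IsCoprime p d) :
    (m.map (fun p => Idl d 1 p)).prod = Idl d 1 m.prod := by
  induction m using Multiset.induction with
  | empty => simp [Idl_one]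
  | cons a s ih =>
    rw [Multiset.map_cons, Multiset.prod_cons, Multiset.prod_cons,
      ih fun p hp => h p (Multiset.mem_cons_of_mem hp),
      Idl_mul_Idl d isCoprime_one_left (h a (Multiset.mem_cons_self _ _))
        isCoprime_one_left (coprime_prod d fun p hp => h p (Multiset.mem_cons_of_mem hp)),
      mul_one]

lemma Idl_inj {a b a' b' : ℤ} (ha : IsCoprime a d) (hb : IsCoprime b d)
    (ha' : IsCoprime a' d) (hb' : IsCoprime b' d)
    (hapos : 0 < a) (hbpos : 0 < b) (hapos' : 0 < a') (hbpos' : 0 < b')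
    (h : Idl d a b = Idl d a' b') : a = a' ∧ b = b' := by
  have key : ∀ x y x' y' : ℤ, IsCoprime x d → IsCoprime y d → Idl d x y ≤ Idl d x' y' →
      x' ∣ x ∧ y' ∣ y := by
    intro x y x' y' hx hy hle
    obtain ⟨k, hk⟩ := exists_k d (a := x) hy
    obtain ⟨k2, hk2⟩ := exists_k d (a := y) hx
    have hk2' : d ∣ x * k2 - y := by
      obtain ⟨c, hc⟩ := hk2
      exact ⟨-c, by linear_combination -hc⟩
    constructor
    · exact (hle (show el d x (y * k) hk ∈ Idl d x y from ⟨dvd_refl x, ⟨k, rfl⟩⟩)).1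
    · exact (hle (show el d (x * k2) y hk2' ∈ Idl d x y from ⟨⟨k2, rfl⟩, dvd_refl y⟩)).2
  obtain ⟨h1, h2⟩ := key a b a' b' ha hb h.le
  obtain ⟨h1', h2'⟩ := key a' b' a b ha' hb' h.ge
  exact ⟨Int.dvd_antisymm hapos.le hapos'.le h1' h1,
    Int.dvd_antisymm hbpos.le hbpos'.le h2' h2⟩

lemma decomp {t : Multiset (Ideal (Od d))}
    (h : ∀ P ∈ t, ∃ p : ℤ, Prime p ∧ 0 < p ∧ IsCoprime p d ∧
      (P = Idl d p 1 ∨ P = Idl d 1 p)) :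
    ∃ m1 m2 : Multiset ℤ, (∀ p ∈ m1, Prime p ∧ 0 < p ∧ IsCoprime p d) ∧
      (∀ p ∈ m2, Prime p ∧ 0 < p ∧ IsCoprime p d) ∧
      t = m1.map (fun p => Idl d p 1) + m2.map (fun p => Idl d 1 p) := by
  induction t using Multiset.induction with
  | empty => exact ⟨0, 0, by simp, by simp, by simp⟩
  | cons P u ih =>
    obtain ⟨m1, m2, hm1, hm2, hu⟩ := ih fun Q hQ => h Q (Multiset.mem_cons_of_mem hQ)
    obtain ⟨p, hp, hppos, hpd, hPor⟩ := h P (Multiset.mem_cons_self _ _)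
    rcases hPor with rfl | rfl
    · refine ⟨p ::ₘ m1, m2, ?_, hm2, ?_⟩
      · rintro q hq
        rcases Multiset.mem_cons.mp hq with rfl | hq'
        · exact ⟨hp, hppos, hpd⟩
        · exact hm1 q hq'
      · rw [Multiset.map_cons, hu, Multiset.cons_add]
    · refine ⟨m1, p ::ₘ m2, hm1, ?_, ?_⟩
      · rintro q hq
        rcases Multiset.mem_cons.mp hq with rfl | hq'
        · exact ⟨hp, hppos, hpd⟩
        · exact hm2 q hq'
      · rw [Multiset.map_cons, hu]
        rw [Multiset.add_cons]

lemma primes_eq {m m' : Multiset ℤ} (h : ∀ p ∈ m, Prime p ∧ 0 < p)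
    (h' : ∀ p ∈ m', Prime p ∧ 0 < p) (hp : m.prod = m'.prod) : m = m' := by
  have hrel := UniqueFactorizationMonoid.factors_unique
    (fun x hx => (h x hx).1.irreducible) (fun x hx => (h' x hx).1.irreducible)
    (hp ▸ Associated.refl _)
  rw [← Multiset.rel_eq]
  refine hrel.mono fun a ha b hb hab => ?_
  rcases Int.associated_iff.mp hab with h1 | h1
  · exact h1
  · exfalso
    have := (h a ha).2
    have := (h' b hb).2
    omega

lemma prod_pos {m : Multiset ℤ} (h : ∀ p ∈ m, 0 < p) : 0 < m.prod := by
  induction m using Multiset.induction with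
  | empty => simp
  | cons a s ih =>
    rw [Multiset.prod_cons]
    exact mul_pos (h a (Multiset.mem_cons_self _ _))
      (ih fun p hp => h p (Multiset.mem_cons_of_mem hp))

lemma prod_cast_primeFactorsList (n : ℕ) (hn : n ≠ 0) :
    ((↑(n.primeFactorsList.map (fun p : ℕ => (p : ℤ))) : Multiset ℤ)).prod = (n : ℤ) := by
  have h1 : ((↑(n.primeFactorsList.map (fun p : ℕ => (p : ℤ))) : Multiset ℤ)).prod
      = (n.primeFactorsList.map (fun p : ℕ => (p : ℤ))).prod := Multiset.prod_coe _
  rw [h1]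
  calc (List.map (fun p : ℕ => (p : ℤ)) n.primeFactorsList).prod
      = ((n.primeFactorsList.prod : ℕ) : ℤ) := (Nat.cast_list_prod _).symm
    _ = (n : ℤ) := by rw [Nat.prod_primeFactorsList hn]

end OdAux

open OdAux

set_option maxHeartbeats 1000000
set_option synthInstance.maxHeartbeats 400000

/-- Corollary 2.4/A.11: every regular ideal `𝔞` of `𝒪_D` with
`gcd(N(𝔞), d) = 1` is a product of prime ideals, uniquely up to reordering. -/
theorem unique_factorization_of_coprime_ideal (d : ℤ) (hd : 1 ≤ d) (A : Ideal (Od d))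
    (hreg : ∃ z ∈ A, ((z : ℤ × ℤ)) ∈ nonZeroDivisors (ℤ × ℤ))
    (hcop : Int.gcd (Nat.card (Od d ⧸ A) : ℤ) d = 1) :
    ∃ s : Multiset (Ideal (Od d)), (∀ P ∈ s, P.IsPrime) ∧ s.prod = A ∧
      ∀ t : Multiset (Ideal (Od d)), (∀ P ∈ t, P.IsPrime) → t.prod = A → t = s := by
  classical
  obtain ⟨z0, hz0A, hz0⟩ := hreg
  set N : ℕ := Nat.card (Od d ⧸ A) with hN
  -- `N • 1 ∈ A`
  have hNA : ((N : Od d)) ∈ A := by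
    have hq : ((N : ℕ) : Od d ⧸ A) = 0 := by
      rcases finite_or_infinite (Od d ⧸ A) with hfin | hinf
      · letI := Fintype.ofFinite (Od d ⧸ A)
        rw [hN, Nat.card_eq_fintype_card]
        exact Nat.cast_card_eq_zero _
      · rw [hN, Nat.card_eq_zero_of_infinite]; simp
    have h2 : Ideal.Quotient.mk A ((N : Od d)) = 0 := by
      rw [map_natCast]; exact hq
    exact Ideal.Quotient.eq_zero_iff_mem.mp h2
  have key_cop : ∀ x : ℤ, x ∣ (N : ℤ) → IsCoprime x d := by
    intro x hx
    rw [Int.isCoprime_iff_gcd_eq_one]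
    have h1 : (Int.gcd x d : ℤ) ∣ (N : ℤ) := dvd_trans (Int.gcd_dvd_left x d) hx
    have h3 : (Int.gcd x d : ℤ) ∣ (Int.gcd (N : ℤ) d : ℤ) := Int.dvd_coe_gcd h1 (Int.gcd_dvd_right x d)
    rw [hcop] at h3
    have h4 : Int.gcd x d ∣ 1 := by exact_mod_cast h3
    exact Nat.dvd_one.mp h4
  -- the two coordinate ideals
  set f1 : Od d →+* ℤ := (RingHom.fst ℤ ℤ).comp (Od d).subtype with hf1
  set f2 : Od d →+* ℤ := (RingHom.snd ℤ ℤ).comp (Od d).subtype with hf2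
  have hf1s : Function.Surjective f1 := fun x => ⟨diag d x, rfl⟩
  have hf2s : Function.Surjective f2 := fun x => ⟨diag d x, rfl⟩
  obtain ⟨a0, ha0⟩ := (IsPrincipalIdealRing.principal (Ideal.map f1 A)).principal
  obtain ⟨b0, hb0⟩ := (IsPrincipalIdealRing.principal (Ideal.map f2 A)).principal
  set na : ℕ := a0.natAbs with hna
  set nb : ℕ := b0.natAbs with hnb
  set a : ℤ := (na : ℤ) with ha
  set b : ℤ := (nb : ℤ) with hb
  have ha' : Ideal.map f1 A = Ideal.span {a} := ha0.trans (Int.span_natAbs a0).symm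
  have hb' : Ideal.map f2 A = Ideal.span {b} := hb0.trans (Int.span_natAbs b0).symm
  have hdvd1 : ∀ z ∈ A, a ∣ (z : ℤ × ℤ).1 := by
    intro z hz
    have h1 : f1 z ∈ Ideal.map f1 A := Ideal.mem_map_of_mem _ hz
    rwa [ha', Ideal.mem_span_singleton] at h1
  have hdvd2 : ∀ z ∈ A, b ∣ (z : ℤ × ℤ).2 := by
    intro z hz
    have h1 : f2 z ∈ Ideal.map f2 A := Ideal.mem_map_of_mem _ hz
    rwa [hb', Ideal.mem_span_singleton] at h1
  have hsur1 : ∀ x : ℤ, a ∣ x → ∃ w ∈ A, (w : ℤ × ℤ).1 = x := by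
    intro x hx
    have h1 : x ∈ Ideal.map f1 A := by rw [ha', Ideal.mem_span_singleton]; exact hx
    rw [Ideal.mem_map_iff_of_surjective f1 hf1s] at h1
    obtain ⟨w, hw, hwx⟩ := h1
    exact ⟨w, hw, hwx⟩
  have hsur2 : ∀ x : ℤ, b ∣ x → ∃ w ∈ A, (w : ℤ × ℤ).2 = x := by
    intro x hx
    have h1 : x ∈ Ideal.map f2 A := by rw [hb', Ideal.mem_span_singleton]; exact hx
    rw [Ideal.mem_map_iff_of_surjective f2 hf2s] at h1
    obtain ⟨w, hw, hwx⟩ := h1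
    exact ⟨w, hw, hwx⟩
  -- a, b divide N
  have hNcoe : ((N : Od d) : ℤ × ℤ) = ((N : ℤ), (N : ℤ)) := by
    rw [diag_natCast]; rfl
  have haN : a ∣ (N : ℤ) := by
    have := hdvd1 _ hNA
    rwa [hNcoe] at this
  have hbN : b ∣ (N : ℤ) := by
    have := hdvd2 _ hNA
    rwa [hNcoe] at this
  have hacop : IsCoprime a d := key_cop a haN
  have hbcop : IsCoprime b d := key_cop b hbN
  -- a, b positive
  have hz01 : (z0 : ℤ × ℤ).1 ≠ 0 := by
    intro h0
    have h1 := (mem_nonZeroDivisors_iff.mp hz0).2 ((1, 0) : ℤ × ℤ)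
    have h2 : ((1, 0) : ℤ × ℤ) * (z0 : ℤ × ℤ) = 0 := by
      rw [Prod.ext_iff]
      constructor
      · show 1 * (z0 : ℤ × ℤ).1 = 0
        rw [one_mul, h0]
      · show 0 * (z0 : ℤ × ℤ).2 = 0
        rw [zero_mul]
    have := h1 h2
    simp [Prod.ext_iff] at this
  have hz02 : (z0 : ℤ × ℤ).2 ≠ 0 := by
    intro h0
    have h1 := (mem_nonZeroDivisors_iff.mp hz0).2 ((0, 1) : ℤ × ℤ)
    have h2 : ((0, 1) : ℤ × ℤ) * (z0 : ℤ × ℤ) = 0 := by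
      rw [Prod.ext_iff]
      constructor
      · show 0 * (z0 : ℤ × ℤ).1 = 0
        rw [zero_mul]
      · show 1 * (z0 : ℤ × ℤ).2 = 0
        rw [one_mul, h0]
    have := h1 h2
    simp [Prod.ext_iff] at this
  have hane : a ≠ 0 := by
    intro h0
    apply hz01
    have := hdvd1 z0 hz0A
    rw [h0] at this
    exact zero_dvd_iff.mp this
  have hbne : b ≠ 0 := by
    intro h0
    apply hz02
    have := hdvd2 z0 hz0A
    rw [h0] at this
    exact zero_dvd_iff.mp this
  have hapos : 0 < a := lt_of_le_of_ne (by positivity) (Ne.symm hane)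
  have hbpos : 0 < b := lt_of_le_of_ne (by positivity) (Ne.symm hbne)
  have hna0 : na ≠ 0 := by
    intro h; apply hane; rw [ha, h]; rfl
  have hnb0 : nb ≠ 0 := by
    intro h; apply hbne; rw [hb, h]; rfl
  -- A = Idl d a b
  have hAeq : A = Idl d a b := by
    apply le_antisymm
    · intro z hz; exact ⟨hdvd1 z hz, hdvd2 z hz⟩
    · rintro z ⟨hz1, hz2⟩
      obtain ⟨w, hwA, hw1⟩ := hsur1 _ hz1
      obtain ⟨v, hvA, hv2⟩ := hsur2 b (dvd_refl b)
      have hd1 : d ∣ (z : ℤ × ℤ).2 - (w : ℤ × ℤ).2 := by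
        obtain ⟨c1, hc1⟩ : d ∣ (z : ℤ × ℤ).1 - (z : ℤ × ℤ).2 := z.2
        obtain ⟨c2, hc2⟩ : d ∣ (w : ℤ × ℤ).1 - (w : ℤ × ℤ).2 := w.2
        exact ⟨c2 - c1, by linear_combination hc2 - hc1 - (by rw [hw1] : (w : ℤ × ℤ).1 = (z : ℤ × ℤ).1)⟩
      have hb1 : b ∣ (z : ℤ × ℤ).2 - (w : ℤ × ℤ).2 := dvd_sub hz2 (hdvd2 w hwA)
      obtain ⟨n, hn⟩ := hbcop.mul_dvd hb1 hd1
      have hzw : z = w + diag d n * (wd d * v) := by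
        apply Subtype.ext
        show (z : ℤ × ℤ) = (w : ℤ × ℤ) + ((n, n) : ℤ × ℤ) * (((0 : ℤ), d) * (v : ℤ × ℤ))
        have hv : (v : ℤ × ℤ) = ((v : ℤ × ℤ).1, (v : ℤ × ℤ).2) := rfl
        have hzz : (z : ℤ × ℤ) = ((z : ℤ × ℤ).1, (z : ℤ × ℤ).2) := rfl
        have hww : (w : ℤ × ℤ) = ((w : ℤ × ℤ).1, (w : ℤ × ℤ).2) := rfl
        rw [hv, hzz, hww, Prod.mk_mul_mk, Prod.mk_mul_mk, Prod.mk_add_mk]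
        refine Prod.ext ?_ ?_
        · show (z : ℤ × ℤ).1 = (w : ℤ × ℤ).1 + n * (0 * (v : ℤ × ℤ).1)
          rw [hw1]; ring
        · show (z : ℤ × ℤ).2 = (w : ℤ × ℤ).2 + n * (d * (v : ℤ × ℤ).2)
          rw [hv2]; linear_combination hn
      rw [hzw]
      exact Submodule.add_mem _ hwA (Ideal.mul_mem_left _ _ (Ideal.mul_mem_left _ _ hvA))
  -- build the multisets
  set m1 : Multiset ℤ := (↑(na.primeFactorsList.map (fun p : ℕ => (p : ℤ))) : Multiset ℤ) with hm1def
  set m2 : Multiset ℤ := (↑(nb.primeFactorsList.map (fun p : ℕ => (p : ℤ))) : Multiset ℤ) with hm2def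
  have hm1mem : ∀ p ∈ m1, Prime p ∧ 0 < p ∧ IsCoprime p d := by
    intro p hp
    rw [hm1def, Multiset.mem_coe, List.mem_map] at hp
    obtain ⟨q, hq, rfl⟩ := hp
    have hqp := Nat.prime_of_mem_primeFactorsList hq
    have hqd : (q : ℤ) ∣ a := by
      rw [ha]
      exact_mod_cast Int.natCast_dvd_natCast.mpr (Nat.dvd_of_mem_primeFactorsList hq)
    exact ⟨Nat.prime_iff_prime_int.mp hqp, by exact_mod_cast hqp.pos,
      key_cop _ (hqd.trans haN)⟩
  have hm2mem : ∀ p ∈ m2, Prime p ∧ 0 < p ∧ IsCoprime p d := by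
    intro p hp
    rw [hm2def, Multiset.mem_coe, List.mem_map] at hp
    obtain ⟨q, hq, rfl⟩ := hp
    have hqp := Nat.prime_of_mem_primeFactorsList hq
    have hqd : (q : ℤ) ∣ b := by
      rw [hb]
      exact_mod_cast Int.natCast_dvd_natCast.mpr (Nat.dvd_of_mem_primeFactorsList hq)
    exact ⟨Nat.prime_iff_prime_int.mp hqp, by exact_mod_cast hqp.pos,
      key_cop _ (hqd.trans hbN)⟩
  have hm1prod : m1.prod = a := by
    rw [hm1def, ha]
    exact prod_cast_primeFactorsList na hna0
  have hm2prod : m2.prod = b := by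
    rw [hm2def, hb]
    exact prod_cast_primeFactorsList nb hnb0
  -- the factorization
  refine ⟨m1.map (fun p => Idl d p 1) + m2.map (fun p => Idl d 1 p), ?_, ?_, ?_⟩
  · intro P hP
    rcases Multiset.mem_add.mp hP with h | h
    · obtain ⟨p, hp, rfl⟩ := Multiset.mem_map.mp h
      exact Idl_prime_left d (hm1mem p hp).1
    · obtain ⟨p, hp, rfl⟩ := Multiset.mem_map.mp h
      exact Idl_prime_right d (hm2mem p hp).1
  · rw [Multiset.prod_add, prod_map_left d (fun p hp => (hm1mem p hp).2.2),
      prod_map_right d (fun p hp => (hm2mem p hp).2.2),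
      Idl_mul_Idl d (hm1prod ▸ coprime_prod d fun p hp => (hm1mem p hp).2.2) isCoprime_one_left
        isCoprime_one_left (hm2prod ▸ coprime_prod d fun p hp => (hm2mem p hp).2.2),
      mul_one, one_mul, hm1prod, hm2prod, hAeq]
  · intro t hT ht
    have hshape : ∀ P ∈ t, ∃ p : ℤ, Prime p ∧ 0 < p ∧ IsCoprime p d ∧
        (P = Idl d p 1 ∨ P = Idl d 1 p) := by
      intro P hPt
      have hAP : A ≤ P := ht ▸ prod_le_of_mem d hPt
      have hdiag : diag d ((na * nb : ℕ) : ℤ) ∈ P := by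
        apply hAP
        rw [hAeq]
        refine ⟨⟨b, ?_⟩, ⟨a, ?_⟩⟩
        · show ((na : ℤ) * (nb : ℤ)) = a * b
          rw [ha, hb]
        · show ((na : ℤ) * (nb : ℤ)) = b * a
          rw [ha, hb]; ring
      obtain ⟨p, hp, hpdvd, hpP⟩ := exists_prime_diag d (hT P hPt) (na * nb)
        (Nat.mul_ne_zero hna0 hnb0) hdiag
      have hpz : Prime ((p : ℕ) : ℤ) := Nat.prime_iff_prime_int.mp hp
      have hpab : ((p : ℕ) : ℤ) ∣ a * b := by
        have : ((na * nb : ℕ) : ℤ) = a * b := by rw [ha, hb]; push_cast; ring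
        rwa [this] at hpdvd
      have hpN : ((p : ℕ) : ℤ) ∣ (N : ℤ) := by
        rcases hpz.2.2 _ _ hpab with h | h
        · exact h.trans haN
        · exact h.trans hbN
      have hpd : IsCoprime ((p : ℕ) : ℤ) d := key_cop _ hpN
      rcases shape d hpz hpd (hT P hPt) hpP with h | h
      · exact ⟨(p : ℤ), hpz, by exact_mod_cast hp.pos, hpd, Or.inl h⟩
      · exact ⟨(p : ℤ), hpz, by exact_mod_cast hp.pos, hpd, Or.inr h⟩
    obtain ⟨m1', m2', hm1', hm2', ht'⟩ := decomp d hshape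
    have htprod : Idl d m1'.prod m2'.prod = Idl d a b := by
      rw [← hAeq, ← ht, ht', Multiset.prod_add,
        prod_map_left d (fun p hp => (hm1' p hp).2.2),
        prod_map_right d (fun p hp => (hm2' p hp).2.2),
        Idl_mul_Idl d (coprime_prod d fun p hp => (hm1' p hp).2.2) isCoprime_one_left
          isCoprime_one_left (coprime_prod d fun p hp => (hm2' p hp).2.2),
        mul_one, one_mul]
    obtain ⟨hae, hbe⟩ := Idl_inj d (coprime_prod d fun p hp => (hm1' p hp).2.2)
      (coprime_prod d fun p hp => (hm2' p hp).2.2) hacop hbcop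
      (prod_pos fun p hp => (hm1' p hp).2.1) (prod_pos fun p hp => (hm2' p hp).2.1)
      hapos hbpos htprod
    have he1 : m1' = m1 := primes_eq (fun p hp => ⟨(hm1' p hp).1, (hm1' p hp).2.1⟩)
      (fun p hp => ⟨(hm1mem p hp).1, (hm1mem p hp).2.1⟩) (by rw [hae, hm1prod])
    have he2 : m2' = m2 := primes_eq (fun p hp => ⟨(hm2' p hp).1, (hm2' p hp).2.1⟩)
      (fun p hp => ⟨(hm2mem p hp).1, (hm2mem p hp).2.1⟩) (by rw [hbe, hm2prod])
    rw [ht', he1, he2]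
end

section
/- If R is a finite commutative ring, then SL₂(R) is generated by elementary matrices, i.e., by the matrices of the form [[1, r],[0, 1]] and [[1, 0],[r, 1]] with r ∈ R. -/
/-- Stable range one for finite commutative rings. -/
lemma exists_isUnit_add_mul_of_isCoprime {R : Type*} [CommRing R] [Finite R]
    {a b : R} (h : IsCoprime a b) : ∃ r : R, IsUnit (a + r * b) := by
  classical
  have hfin : Finite (Ideal R) :=
    Finite.of_injective (fun I : Ideal R => (I : Set R)) SetLike.coe_injective
  set ι := {I : Ideal R // I.IsMaximal} with hι
  haveI : Finite ι := Subtype.finite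
  -- choose local solutions
  have key : ∀ m : ι, ∃ c : R, a + c * b ∉ m.1 := by
    intro m
    haveI := m.2
    by_cases hb : b ∈ m.1
    · refine ⟨0, fun hmem => ?_⟩
      obtain ⟨x, y, hxy⟩ := h
      have ha : a ∈ m.1 := by simpa using hmem
      have : (1 : R) ∈ m.1 := by
        rw [← hxy]; exact m.1.add_mem (m.1.mul_mem_left x ha) (m.1.mul_mem_left y hb)
      exact m.2.ne_top (m.1.eq_top_iff_one.mpr this)
    · -- b ∉ m, work in the field R ⧸ m
      letI : Field (R ⧸ m.1) := Ideal.Quotient.field m.1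
      have hb' : (Ideal.Quotient.mk m.1 b) ≠ 0 := by
        simpa [Ideal.Quotient.eq_zero_iff_mem] using hb
      obtain ⟨c, hc⟩ := Ideal.Quotient.mk_surjective
        ((1 - Ideal.Quotient.mk m.1 a) * (Ideal.Quotient.mk m.1 b)⁻¹)
      refine ⟨c, fun hmem => ?_⟩
      have : Ideal.Quotient.mk m.1 (a + c * b) = 0 := by
        rwa [Ideal.Quotient.eq_zero_iff_mem]
      have h1 : ((Ideal.Quotient.mk m.1 b)⁻¹ * Ideal.Quotient.mk m.1 b) = 1 :=
        inv_mul_cancel₀ (G₀ := R ⧸ m.1) (by exact hb')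
      rw [map_add, map_mul, hc, mul_assoc, h1, mul_one] at this
      simp at this
  choose c hc using key
  -- CRT
  obtain ⟨r, hr⟩ := Ideal.pi_quotient_surjective (I := fun m : ι => m.1)
      (fun I J hIJ => Ideal.isCoprime_iff_sup_eq.mpr <|
        I.2.coprime_of_ne J.2 (by rwa [Ne, Subtype.coe_inj]))
    (fun m => Ideal.Quotient.mk m.1 (c m))
  refine ⟨r, ?_⟩
  by_contra hu
  obtain ⟨m, hm, hmem⟩ := exists_max_ideal_of_mem_nonunits hu
  have hrc : r - c ⟨m, hm⟩ ∈ m := by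
    have := hr ⟨m, hm⟩
    rwa [← sub_eq_zero, ← map_sub, Ideal.Quotient.eq_zero_iff_mem] at this
  have : a + c ⟨m, hm⟩ * b ∈ m := by
    have h2 : (r - c ⟨m, hm⟩) * b ∈ m := m.mul_mem_right b hrc
    have := m.sub_mem hmem h2
    convert this using 1
    ring
  exact hc ⟨m, hm⟩ this

section SL2
variable {R : Type*} [CommRing R]

open Matrix

/-- The upper elementary matrix. -/
def Esl (r : R) : Matrix.SpecialLinearGroup (Fin 2) R :=
  ⟨!![1, r; 0, 1], by simp [Matrix.det_fin_two_of]⟩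

/-- The lower elementary matrix. -/
def Lsl (r : R) : Matrix.SpecialLinearGroup (Fin 2) R :=
  ⟨!![1, 0; r, 1], by simp [Matrix.det_fin_two_of]⟩

lemma key_decomp (r : R) (A : Matrix.SpecialLinearGroup (Fin 2) R) (u : Rˣ)
    (hu : (u : R) = A 0 0 + r * A 1 0) :
    Esl r * A = Lsl (A 1 0 * (↑u⁻¹ : R)) * Esl (u : R) * Lsl (-(↑u⁻¹ : R)) * Esl (u : R) *
      (Esl (-1) * Lsl 1 * Esl (-1)) * Esl ((↑u⁻¹ : R) * (A 0 1 + r * A 1 1)) := by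
  have hdet : A 0 0 * A 1 1 - A 0 1 * A 1 0 = 1 := by
    have := A.2
    rwa [Matrix.det_fin_two] at this
  have hvu : ((↑u⁻¹ : R)) * (u : R) = 1 := u.inv_mul
  apply Subtype.ext
  simp only [Matrix.SpecialLinearGroup.coe_mul]
  simp only [Esl, Lsl]
  ext i j
  fin_cases i <;> fin_cases j <;>
    simp [Matrix.mul_apply, Fin.sum_univ_two]
  · linear_combination hu.symm
  · linear_combination hvu
  · linear_combination ((↑u⁻¹ : R) * (A 0 1 + r * A 1 1) - A 1 1) * hvu +
      (↑u⁻¹ : R) * hdet + (↑u⁻¹ : R) * A 1 1 * hu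
end SL2

/-- The set of elementary matrices `[[1,r],[0,1]]` and `[[1,0],[r,1]]` in `SL₂(R)`. -/
def elementarySL2 (R : Type*) [CommRing R] :
    Set (Matrix.SpecialLinearGroup (Fin 2) R) :=
  {A | ∃ r : R, (A : Matrix (Fin 2) (Fin 2) R) = !![1, r; 0, 1] ∨
      (A : Matrix (Fin 2) (Fin 2) R) = !![1, 0; r, 1]}

/-- Lemma A.13: for a finite commutative ring `R`, the group `SL₂(R)`
is generated by elementary matrices. -/
theorem sl2_generated_by_elementary_of_finite (R : Type*) [CommRing R] [Finite R] :
    Subgroup.closure (elementarySL2 R) = ⊤ := by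
  rw [Subgroup.eq_top_iff']
  intro A
  have hE : ∀ r : R, Esl r ∈ Subgroup.closure (elementarySL2 R) := fun r =>
    Subgroup.subset_closure ⟨r, Or.inl rfl⟩
  have hL : ∀ r : R, Lsl r ∈ Subgroup.closure (elementarySL2 R) := fun r =>
    Subgroup.subset_closure ⟨r, Or.inr rfl⟩
  have hdet : A 0 0 * A 1 1 - A 0 1 * A 1 0 = 1 := by
    have := A.2
    rwa [Matrix.det_fin_two] at this
  have hcop : IsCoprime (A 0 0) (A 1 0) :=
    ⟨A 1 1, -(A 0 1), by linear_combination hdet⟩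
  obtain ⟨r, hr⟩ := exists_isUnit_add_mul_of_isCoprime hcop
  obtain ⟨u, hu⟩ := hr
  have hmem : Esl r * A ∈ Subgroup.closure (elementarySL2 R) := by
    rw [key_decomp r A u hu]
    exact mul_mem (mul_mem (mul_mem (mul_mem (mul_mem (hL _) (hE _)) (hL _)) (hE _))
      (mul_mem (mul_mem (hE _) (hL _)) (hE _))) (hE _)
  have hA : A = (Esl r)⁻¹ * (Esl r * A) := by rw [inv_mul_cancel_left]
  rw [hA]
  exact mul_mem (inv_mem (hE r)) hmem
end

section
/- Let 𝔞 be a regular ideal of 𝒪_D. Then the reduction homomorphism SL₂(𝒪_D) → SL₂(𝒪_D/𝔞), given by reducing all matrix entries modulo 𝔞, is surjective, and its kernel is the principal congruence subgroup Γ^D(𝔞). Equivalently, the sequence 0 → Γ^D(𝔞) → SL₂(𝒪_D) → SL₂(𝒪_D/𝔞) → 0 is exact. -/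
open Matrix

variable (R : Type*) [CommRing R]

/-- The Hecke congruence subgroup `Γ₀(𝔞)` of `SL₂(R)`: matrices whose lower-left entry
lies in the ideal `𝔞`. -/
def GammaZero (A : Ideal R) : Subgroup (Matrix.SpecialLinearGroup (Fin 2) R) where
  carrier := {M | M.1 1 0 ∈ A}
  one_mem' := by
    show (1 : Matrix.SpecialLinearGroup (Fin 2) R).1 1 0 ∈ A
    simp
  mul_mem' := by
    rintro M N hM hN
    show (M * N).1 1 0 ∈ A
    have e : (M * N).1 1 0 = M.1 1 0 * N.1 0 0 + M.1 1 1 * N.1 1 0 := by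
      simp [Matrix.SpecialLinearGroup.coe_mul, Matrix.mul_apply, Fin.sum_univ_two]
    rw [e]
    exact A.add_mem (A.mul_mem_right _ hM) (A.mul_mem_left _ hN)
  inv_mem' := by
    rintro M hM
    show (M⁻¹).1 1 0 ∈ A
    rw [Matrix.SpecialLinearGroup.SL2_inv_expl M]
    simpa using A.neg_mem hM

/-- The congruence subgroup `Γ₁(𝔞)` of `SL₂(R)`: matrices whose lower-left entry and
whose diagonal entries minus `1` lie in the ideal `𝔞`. -/
def GammaOne (A : Ideal R) : Subgroup (Matrix.SpecialLinearGroup (Fin 2) R) where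
  carrier := {M | M.1 1 0 ∈ A ∧ M.1 0 0 - 1 ∈ A ∧ M.1 1 1 - 1 ∈ A}
  one_mem' := by
    refine ⟨?_, ?_, ?_⟩ <;>
      · show _ ∈ A
        simp
  mul_mem' := by
    rintro M N ⟨hM0, hM1, hM2⟩ ⟨hN0, hN1, hN2⟩
    have e : ∀ i j, (M * N).1 i j = M.1 i 0 * N.1 0 j + M.1 i 1 * N.1 1 j := by
      intro i j
      simp [Matrix.SpecialLinearGroup.coe_mul, Matrix.mul_apply, Fin.sum_univ_two]
    refine ⟨?_, ?_, ?_⟩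
    · show (M * N).1 1 0 ∈ A
      rw [e]
      exact A.add_mem (A.mul_mem_right _ hM0) (A.mul_mem_left _ hN0)
    · show (M * N).1 0 0 - 1 ∈ A
      rw [e]
      have h : M.1 0 0 * N.1 0 0 + M.1 0 1 * N.1 1 0 - 1
          = (M.1 0 0 - 1) * N.1 0 0 + (N.1 0 0 - 1) + M.1 0 1 * N.1 1 0 := by ring
      rw [h]
      exact A.add_mem (A.add_mem (A.mul_mem_right _ hM1) hN1) (A.mul_mem_left _ hN0)
    · show (M * N).1 1 1 - 1 ∈ A
      rw [e]
      have h : M.1 1 0 * N.1 0 1 + M.1 1 1 * N.1 1 1 - 1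
          = (M.1 1 1 - 1) * N.1 1 1 + (N.1 1 1 - 1) + M.1 1 0 * N.1 0 1 := by ring
      rw [h]
      exact A.add_mem (A.add_mem (A.mul_mem_right _ hM2) hN2) (A.mul_mem_right _ hM0)
  inv_mem' := by
    rintro M ⟨hM0, hM1, hM2⟩
    rw [Set.mem_setOf_eq, Matrix.SpecialLinearGroup.SL2_inv_expl M]
    refine ⟨?_, ?_, ?_⟩
    · simpa using A.neg_mem hM0
    · simpa using hM2
    · simpa using hM1

/-- The principal congruence subgroup `Γ(𝔞)` of `SL₂(R)`: matrices congruent to the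
identity matrix modulo the ideal `𝔞` (all entries of `M - 1` lie in `𝔞`). -/
def GammaFull (A : Ideal R) : Subgroup (Matrix.SpecialLinearGroup (Fin 2) R) where
  carrier := {M | M.1 0 0 - 1 ∈ A ∧ M.1 0 1 ∈ A ∧ M.1 1 0 ∈ A ∧ M.1 1 1 - 1 ∈ A}
  one_mem' := by
    refine ⟨?_, ?_, ?_, ?_⟩ <;>
      · show _ ∈ A
        simp
  mul_mem' := by
    rintro M N ⟨hM1, hM2, hM3, hM4⟩ ⟨hN1, hN2, hN3, hN4⟩
    have e : ∀ i j, (M * N).1 i j = M.1 i 0 * N.1 0 j + M.1 i 1 * N.1 1 j := by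
      intro i j
      simp [Matrix.SpecialLinearGroup.coe_mul, Matrix.mul_apply, Fin.sum_univ_two]
    refine ⟨?_, ?_, ?_, ?_⟩
    · show (M * N).1 0 0 - 1 ∈ A
      rw [e]
      have h : M.1 0 0 * N.1 0 0 + M.1 0 1 * N.1 1 0 - 1
          = (M.1 0 0 - 1) * N.1 0 0 + (N.1 0 0 - 1) + M.1 0 1 * N.1 1 0 := by ring
      rw [h]
      exact A.add_mem (A.add_mem (A.mul_mem_right _ hM1) hN1) (A.mul_mem_left _ hN3)
    · show (M * N).1 0 1 ∈ A
      rw [e]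
      exact A.add_mem (A.mul_mem_left _ hN2) (A.mul_mem_right _ hM2)
    · show (M * N).1 1 0 ∈ A
      rw [e]
      exact A.add_mem (A.mul_mem_right _ hM3) (A.mul_mem_left _ hN3)
    · show (M * N).1 1 1 - 1 ∈ A
      rw [e]
      have h : M.1 1 0 * N.1 0 1 + M.1 1 1 * N.1 1 1 - 1
          = (M.1 1 1 - 1) * N.1 1 1 + (N.1 1 1 - 1) + M.1 1 0 * N.1 0 1 := by ring
      rw [h]
      exact A.add_mem (A.add_mem (A.mul_mem_right _ hM4) hN4) (A.mul_mem_right _ hM3)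
  inv_mem' := by
    rintro M ⟨hM1, hM2, hM3, hM4⟩
    rw [Set.mem_setOf_eq, Matrix.SpecialLinearGroup.SL2_inv_expl M]
    refine ⟨?_, ?_, ?_, ?_⟩
    · simpa using hM4
    · simpa using A.neg_mem hM2
    · simpa using A.neg_mem hM3
    · simpa using hM1


open Matrix

/-- Stable range one for finite commutative rings. -/
lemma exists_isUnit_add_mul_aux {S : Type*} [CommRing S] [Finite S] (a c : S)
    (h : ∃ u v : S, u * a + v * c = 1) : ∃ t : S, IsUnit (a + t * c) := by
  classical
  haveI : Fintype {I : Ideal S | I.IsMaximal} :=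
    Fintype.ofFinite _
  have hcop : Pairwise (Function.onFun IsCoprime fun i : {I : Ideal S | I.IsMaximal} => (i : Ideal S)) :=
    fun I J hne =>
      Ideal.isCoprime_iff_sup_eq.mpr <| I.2.coprime_of_ne J.2 (by
        simpa [Ne, Subtype.coe_inj] using hne)
  obtain ⟨tq, htq⟩ := Ideal.quotientInfToPiQuotient_surj hcop
    (fun i => if a ∈ (i : Ideal S) then 1 else 0)
  obtain ⟨t, rfl⟩ := Ideal.Quotient.mk_surjective tq
  refine ⟨t, ?_⟩
  by_contra hu
  obtain ⟨m, hm, hmem⟩ := Ideal.exists_le_maximal (Ideal.span {a + t * c}) (by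
    intro htop
    exact hu (Ideal.span_singleton_eq_top.mp htop))
  have hatc : a + t * c ∈ m := hmem (Ideal.subset_span rfl)
  have hi := congrFun htq ⟨m, hm⟩
  rw [Ideal.quotientInfToPiQuotient_mk'] at hi
  by_cases ham : a ∈ m
  · rw [if_pos ham] at hi
    have ht1 : t - 1 ∈ m := by
      rw [← Ideal.Quotient.eq] at *
      simpa using hi
    have hcm : c ∉ m := by
      intro hcm
      obtain ⟨u, v, huv⟩ := h
      have : (1 : S) ∈ m := huv ▸ m.add_mem (m.mul_mem_left u ham) (m.mul_mem_left v hcm)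
      exact hm.ne_top ((Ideal.eq_top_iff_one m).mpr this)
    have htc : t * c ∈ m := by
      have : a + t * c - a ∈ m := m.sub_mem hatc ham
      simpa using this
    rcases hm.isPrime.mem_or_mem htc with htm | hcm'
    · have : (1 : S) ∈ m := by
        have := m.sub_mem htm ht1
        simpa using this
      exact hm.ne_top ((Ideal.eq_top_iff_one m).mpr this)
    · exact hcm hcm'
  · rw [if_neg ham] at hi
    have htm : t ∈ m := by
      rwa [Ideal.Quotient.eq_zero_iff_mem] at hi
    have : a ∈ m := by
      have := m.sub_mem hatc (m.mul_mem_right c htm)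
      simpa using this
    exact ham this


open Matrix

/-- Elementary matrix with upper-right entry `x`. -/
def Em12 {R : Type*} [CommRing R] (x : R) : Matrix.SpecialLinearGroup (Fin 2) R :=
  ⟨!![1, x; 0, 1], by simp [Matrix.det_fin_two_of]⟩

/-- Elementary matrix with lower-left entry `x`. -/
def Em21 {R : Type*} [CommRing R] (x : R) : Matrix.SpecialLinearGroup (Fin 2) R :=
  ⟨!![1, 0; x, 1], by simp [Matrix.det_fin_two_of]⟩

lemma map_Em12 {R S : Type*} [CommRing R] [CommRing S] (f : R →+* S) (x : R) :
    Matrix.SpecialLinearGroup.map f (Em12 x) = Em12 (f x) := by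
  apply Subtype.ext
  rw [Matrix.SpecialLinearGroup.map_apply_coe]
  ext i j
  fin_cases i <;> fin_cases j <;>
    simp [Em12, Matrix.SpecialLinearGroup.map, RingHom.mapMatrix_apply, Matrix.map_apply]

lemma map_Em21 {R S : Type*} [CommRing R] [CommRing S] (f : R →+* S) (x : R) :
    Matrix.SpecialLinearGroup.map f (Em21 x) = Em21 (f x) := by
  apply Subtype.ext
  rw [Matrix.SpecialLinearGroup.map_apply_coe]
  ext i j
  fin_cases i <;> fin_cases j <;>
    simp [Em21, Matrix.SpecialLinearGroup.map, RingHom.mapMatrix_apply, Matrix.map_apply]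

lemma SL2_decomp_of_isUnit {S : Type*} [CommRing S] (M : Matrix.SpecialLinearGroup (Fin 2) S)
    (u : Sˣ) (hu : (u : S) = M.1 1 0) :
    M = Em12 ((M.1 0 0 - 1) * ↑u⁻¹) * Em21 (M.1 1 0) * Em12 ((M.1 1 1 - 1) * ↑u⁻¹) := by
  have hdet : M.1 0 0 * M.1 1 1 - M.1 0 1 * M.1 1 0 = 1 := by
    have h2 := M.2
    rwa [Matrix.det_fin_two] at h2
  have hinv : (↑u⁻¹ : S) * M.1 1 0 = 1 := by rw [← hu]; exact u.inv_mul
  apply Subtype.ext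
  show M.1 = _
  rw [Matrix.SpecialLinearGroup.coe_mul, Matrix.SpecialLinearGroup.coe_mul]
  simp only [Em12, Em21]
  rw [Matrix.mul_fin_two, Matrix.mul_fin_two]
  ext i j
  fin_cases i <;> fin_cases j <;>
    simp only [Matrix.cons_val', Matrix.cons_val_zero, Matrix.cons_val_one, Matrix.head_cons,
      Matrix.head_fin_const, Matrix.empty_val', Matrix.cons_val_fin_one, Fin.isValue,
      Matrix.of_apply, Fin.zero_eta, Fin.mk_one]
  · linear_combination -(M.1 0 0 - 1) * hinv
  · linear_combination (-(M.1 0 1 + (↑u⁻¹ : S) * (M.1 1 1 - 1) * (M.1 0 0 - 1))) * hinv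
      - (↑u⁻¹ : S) * hdet
  · ring
  · linear_combination -(M.1 1 1 - 1) * hinv

lemma SL2_map_surjective {R S : Type*} [CommRing R] [CommRing S] [Finite S]
    (f : R →+* S) (hf : Function.Surjective f) :
    Function.Surjective (Matrix.SpecialLinearGroup.map (n := Fin 2) f) := by
  set H := (Matrix.SpecialLinearGroup.map (n := Fin 2) f).range with hH
  have h12 : ∀ x : S, Em12 x ∈ H := by
    intro x
    obtain ⟨y, rfl⟩ := hf x
    exact ⟨Em12 y, map_Em12 f y⟩
  have h21 : ∀ x : S, Em21 x ∈ H := by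
    intro x
    obtain ⟨y, rfl⟩ := hf x
    exact ⟨Em21 y, map_Em21 f y⟩
  have key : ∀ M : Matrix.SpecialLinearGroup (Fin 2) S, M ∈ H := by
    intro M
    have hdet : M.1 0 0 * M.1 1 1 - M.1 0 1 * M.1 1 0 = 1 := by
      have h2 := M.2
      rwa [Matrix.det_fin_two] at h2
    obtain ⟨t, hu⟩ := exists_isUnit_add_mul_aux (M.1 1 0) (M.1 0 0)
      ⟨-(M.1 0 1), M.1 1 1, by linear_combination hdet⟩
    obtain ⟨u, hu'⟩ := hu
    have h10 : (Em21 t * M).1 1 0 = M.1 1 0 + t * M.1 0 0 := by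
      rw [Matrix.SpecialLinearGroup.coe_mul]
      simp [Em21, Matrix.SpecialLinearGroup.coe_mul, Matrix.mul_apply, Fin.sum_univ_two]
      ring
    have hM' : Em21 t * M ∈ H := by
      rw [SL2_decomp_of_isUnit (Em21 t * M) u (by rw [hu', h10])]
      exact H.mul_mem (H.mul_mem (h12 _) (h21 _)) (h12 _)
    have hMeq : M = (Em21 t)⁻¹ * (Em21 t * M) := by group
    rw [hMeq]
    exact H.mul_mem (H.inv_mem (h21 t)) hM'
  intro M
  exact key M

lemma Od_quotient_finite (d : ℤ) (hd : 1 ≤ d) (A : Ideal (Od d))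
    (hreg : ∃ z ∈ A, ((z : ℤ × ℤ)) ∈ nonZeroDivisors (ℤ × ℤ)) :
    Finite (Od d ⧸ A) := by
  obtain ⟨z, hzA, hz⟩ := hreg
  rw [mem_nonZeroDivisors_iff] at hz
  have hz1 : (z : ℤ × ℤ).1 ≠ 0 := by
    intro h0
    have h := hz.2 (((1 : ℤ), (0 : ℤ)) : ℤ × ℤ) (by
      rw [Prod.ext_iff]; constructor <;> simp [h0])
    simpa using congrArg Prod.fst h
  have hz2 : (z : ℤ × ℤ).2 ≠ 0 := by
    intro h0
    have h := hz.2 (((0 : ℤ), (1 : ℤ)) : ℤ × ℤ) (by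
      rw [Prod.ext_iff]; constructor <;> simp [h0])
    simpa using congrArg Prod.snd h
  set n : ℤ := (z : ℤ × ℤ).1 * (z : ℤ × ℤ).2 with hn
  have hn0 : n ≠ 0 := mul_ne_zero hz1 hz2
  set N : ℕ := (n * d).natAbs with hN
  have hNd : n * d ≠ 0 := mul_ne_zero hn0 (by omega)
  haveI : NeZero N := ⟨Int.natAbs_ne_zero.mpr hNd⟩
  have hzb : (((z : ℤ × ℤ).2, (z : ℤ × ℤ).1) : ℤ × ℤ) ∈ Od d := by
    rw [mem_Od]
    exact (dvd_sub_comm).mp z.2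
  set zb : Od d := ⟨((z : ℤ × ℤ).2, (z : ℤ × ℤ).1), hzb⟩ with hzbdef
  have hvd : ((d, 0) : ℤ × ℤ) ∈ Od d := ⟨1, by ring⟩
  set vd : Od d := ⟨((d : ℤ), (0 : ℤ)), hvd⟩ with hvddef
  have he1 : vd * (z * zb) ∈ A := A.mul_mem_left _ (A.mul_mem_right zb hzA)
  have he2 : wd d * (z * zb) ∈ A := A.mul_mem_left _ (A.mul_mem_right zb hzA)
  set ψ : Od d →+* ZMod N × ZMod N :=
    ((Int.castRingHom (ZMod N)).prodMap (Int.castRingHom (ZMod N))).comp (Od d).subtype with hψ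
  have hker : RingHom.ker ψ ≤ A := by
    intro w hw
    rw [RingHom.mem_ker] at hw
    have hw1 : ((N : ℤ)) ∣ (w : ℤ × ℤ).1 := by
      have := congrArg Prod.fst hw
      rwa [← ZMod.intCast_zmod_eq_zero_iff_dvd]
    have hw2 : ((N : ℤ)) ∣ (w : ℤ × ℤ).2 := by
      have := congrArg Prod.snd hw
      rwa [← ZMod.intCast_zmod_eq_zero_iff_dvd]
    obtain ⟨x, hx⟩ := hw1
    obtain ⟨y, hy⟩ := hw2
    obtain ⟨k, hk⟩ : n * d ∣ (N : ℤ) := Int.dvd_natAbs.mpr dvd_rfl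
    set s1 : Od d := ⟨(k * x, k * x), by rw [mem_Od]; simp⟩ with hs1
    set s2 : Od d := ⟨(k * y, k * y), by rw [mem_Od]; simp⟩ with hs2
    have hwdecomp : w = vd * (z * zb) * s1 + wd d * (z * zb) * s2 := by
      apply Subtype.ext
      rw [Prod.ext_iff]
      constructor
      · show (w : ℤ × ℤ).1 = _
        push_cast [hvddef, hzbdef, hs1, hs2, wd]
        show (w : ℤ × ℤ).1 = d * ((z : ℤ × ℤ).1 * (z : ℤ × ℤ).2) * (k * x)
          + 0 * ((z : ℤ × ℤ).1 * (z : ℤ × ℤ).2) * (k * y)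
        rw [hx, hk]
        ring
      · show (w : ℤ × ℤ).2 = _
        push_cast [hvddef, hzbdef, hs1, hs2, wd]
        show (w : ℤ × ℤ).2 = 0 * ((z : ℤ × ℤ).2 * (z : ℤ × ℤ).1) * (k * x)
          + d * ((z : ℤ × ℤ).2 * (z : ℤ × ℤ).1) * (k * y)
        rw [hy, hk]
        ring
    rw [hwdecomp]
    exact A.add_mem (A.mul_mem_right _ he1) (A.mul_mem_right _ he2)
  haveI : Finite (Od d ⧸ RingHom.ker ψ) :=
    Finite.of_injective _ (RingHom.kerLift_injective ψ)
  exact Finite.of_surjective (Ideal.Quotient.factor hker) (fun x => by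
    obtain ⟨r, rfl⟩ := Ideal.Quotient.mk_surjective x
    exact ⟨Ideal.Quotient.mk _ r, Ideal.Quotient.factor_mk hker r⟩)

set_option synthInstance.maxHeartbeats 1000000 in
set_option maxHeartbeats 1600000 in
/-- Proposition 2.5: for a regular ideal `𝔞` of `𝒪_D`, the entrywise
reduction map `SL₂(𝒪_D) → SL₂(𝒪_D/𝔞)` is surjective and its kernel is the principal
congruence subgroup `Γ^D(𝔞)`; i.e. `0 → Γ^D(𝔞) → SL₂(𝒪_D) → SL₂(𝒪_D/𝔞) → 0` is exact. -/
theorem reduction_surjective_ker_eq_gamma (d : ℤ) (hd : 1 ≤ d) (A : Ideal (Od d))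
    (hreg : ∃ z ∈ A, ((z : ℤ × ℤ)) ∈ nonZeroDivisors (ℤ × ℤ)) :
    Function.Surjective (Matrix.SpecialLinearGroup.map (Ideal.Quotient.mk A) :
        Matrix.SpecialLinearGroup (Fin 2) (Od d) →*
          Matrix.SpecialLinearGroup (Fin 2) (Od d ⧸ A)) ∧
      MonoidHom.ker (Matrix.SpecialLinearGroup.map (Ideal.Quotient.mk A) :
        Matrix.SpecialLinearGroup (Fin 2) (Od d) →*
          Matrix.SpecialLinearGroup (Fin 2) (Od d ⧸ A)) = GammaFull (Od d) A := by
  haveI : Finite (Od d ⧸ A) := Od_quotient_finite d hd A hreg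
  constructor
  · exact SL2_map_surjective _ Ideal.Quotient.mk_surjective
  · ext M
    rw [MonoidHom.mem_ker]
    have hmem : M ∈ GammaFull (Od d) A ↔
        (M.1 0 0 - 1 ∈ A ∧ M.1 0 1 ∈ A ∧ M.1 1 0 ∈ A ∧ M.1 1 1 - 1 ∈ A) := Iff.rfl
    rw [hmem]
    constructor
    · intro h
      have hcoe : ((Matrix.SpecialLinearGroup.map (Ideal.Quotient.mk A)) M).1
          = (1 : Matrix (Fin 2) (Fin 2) (Od d ⧸ A)) := by
        rw [h]; rfl
      have he : ∀ i j, Ideal.Quotient.mk A (M.1 i j)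
          = (1 : Matrix (Fin 2) (Fin 2) (Od d ⧸ A)) i j := by
        intro i j
        rw [← hcoe]
        rfl
      have e00 := he 0 0
      have e01 := he 0 1
      have e10 := he 1 0
      have e11 := he 1 1
      rw [Matrix.one_apply_eq] at e00 e11
      rw [Matrix.one_apply_ne (by decide)] at e01 e10
      refine ⟨?_, ?_, ?_, ?_⟩
      · apply Ideal.Quotient.eq_zero_iff_mem.mp
        rw [map_sub, e00, _root_.map_one, sub_self]
      · exact Ideal.Quotient.eq_zero_iff_mem.mp e01
      · exact Ideal.Quotient.eq_zero_iff_mem.mp e10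
      · apply Ideal.Quotient.eq_zero_iff_mem.mp
        rw [map_sub, e11, _root_.map_one, sub_self]
    · rintro ⟨h1, h2, h3, h4⟩
      have e1 : Ideal.Quotient.mk A (M.1 0 0) = 1 := by
        have h0 : Ideal.Quotient.mk A (M.1 0 0 - 1) = 0 :=
          Ideal.Quotient.eq_zero_iff_mem.mpr h1
        rwa [map_sub, _root_.map_one, sub_eq_zero] at h0
      have e4 : Ideal.Quotient.mk A (M.1 1 1) = 1 := by
        have h0 : Ideal.Quotient.mk A (M.1 1 1 - 1) = 0 :=
          Ideal.Quotient.eq_zero_iff_mem.mpr h4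
        rwa [map_sub, _root_.map_one, sub_eq_zero] at h0
      have e2 : Ideal.Quotient.mk A (M.1 0 1) = 0 :=
        Ideal.Quotient.eq_zero_iff_mem.mpr h2
      have e3 : Ideal.Quotient.mk A (M.1 1 0) = 0 :=
        Ideal.Quotient.eq_zero_iff_mem.mpr h3
      apply Subtype.ext
      show (Ideal.Quotient.mk A).mapMatrix M.1 = _
      rw [Matrix.SpecialLinearGroup.coe_one]
      ext i j
      fin_cases i <;> fin_cases j
      · show Ideal.Quotient.mk A (M.1 0 0) = (1 : Matrix (Fin 2) (Fin 2) (Od d ⧸ A)) 0 0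
        rw [Matrix.one_apply_eq, e1]
      · show Ideal.Quotient.mk A (M.1 0 1) = (1 : Matrix (Fin 2) (Fin 2) (Od d ⧸ A)) 0 1
        rw [Matrix.one_apply_ne (by decide), e2]
      · show Ideal.Quotient.mk A (M.1 1 0) = (1 : Matrix (Fin 2) (Fin 2) (Od d ⧸ A)) 1 0
        rw [Matrix.one_apply_ne (by decide), e3]
      · show Ideal.Quotient.mk A (M.1 1 1) = (1 : Matrix (Fin 2) (Fin 2) (Od d ⧸ A)) 1 1
        rw [Matrix.one_apply_eq, e4]
end

section
/- Let 𝔞 be a regular ideal of 𝒪_D (hence of finite norm). Then the index of Γ₁^D(𝔞) in Γ₀^D(𝔞) equals φ^D(𝔞), the number of units of the quotient ring 𝒪_D/𝔞. -/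
open Matrix

variable (R : Type*) [CommRing R]

/-- The homomorphism `Γ₀(A) → (R/A)ˣ` given by the lower-right entry mod `A`. -/
def gammaZeroToUnits (A : Ideal R) : GammaZero R A →* (R ⧸ A)ˣ where
  toFun M :=
    { val := Ideal.Quotient.mk A (M.1.1 1 1)
      inv := Ideal.Quotient.mk A (M.1.1 0 0)
      val_inv := by
        rw [← _root_.map_mul, ← _root_.map_one (Ideal.Quotient.mk A), Ideal.Quotient.mk_eq_mk_iff_sub_mem]
        have hdet := M.1.2
        rw [Matrix.det_fin_two] at hdet
        have : M.1.1 1 1 * M.1.1 0 0 - 1 = M.1.1 0 1 * M.1.1 1 0 := by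
          linear_combination hdet
        rw [this]
        exact A.mul_mem_left _ M.2
      inv_val := by
        rw [← _root_.map_mul, ← _root_.map_one (Ideal.Quotient.mk A), Ideal.Quotient.mk_eq_mk_iff_sub_mem]
        have hdet := M.1.2
        rw [Matrix.det_fin_two] at hdet
        have : M.1.1 0 0 * M.1.1 1 1 - 1 = M.1.1 0 1 * M.1.1 1 0 := by
          linear_combination hdet
        rw [this]
        exact A.mul_mem_left _ M.2 }
  map_one' := by
    ext
    show Ideal.Quotient.mk A ((1 : Matrix.SpecialLinearGroup (Fin 2) R).1 1 1) = 1
    simp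
  map_mul' := by
    intro M N
    ext
    show Ideal.Quotient.mk A ((M.1 * N.1).1 1 1)
      = Ideal.Quotient.mk A (M.1.1 1 1) * Ideal.Quotient.mk A (N.1.1 1 1)
    rw [← _root_.map_mul, Ideal.Quotient.mk_eq_mk_iff_sub_mem]
    have e : (M.1 * N.1).1 1 1 = M.1.1 1 0 * N.1.1 0 1 + M.1.1 1 1 * N.1.1 1 1 := by
      simp [Matrix.SpecialLinearGroup.coe_mul, Matrix.mul_apply, Fin.sum_univ_two]
    rw [e]
    have : M.1.1 1 0 * N.1.1 0 1 + M.1.1 1 1 * N.1.1 1 1 - M.1.1 1 1 * N.1.1 1 1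
        = M.1.1 1 0 * N.1.1 0 1 := by ring
    rw [this]
    exact A.mul_mem_right _ M.2

lemma ker_gammaZeroToUnits (A : Ideal R) :
    (gammaZeroToUnits R A).ker = (GammaOne R A).subgroupOf (GammaZero R A) := by
  ext M
  rw [MonoidHom.mem_ker, Subgroup.mem_subgroupOf]
  constructor
  · intro h
    have h11 : M.1.1 1 1 - 1 ∈ A := by
      rw [← Ideal.Quotient.mk_eq_mk_iff_sub_mem, _root_.map_one]
      exact congrArg Units.val h
    refine ⟨M.2, ?_, h11⟩
    have hdet := M.1.2
    rw [Matrix.det_fin_two] at hdet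
    have e : M.1.1 0 0 - 1
        = (M.1.1 0 0 * M.1.1 1 1 - 1) - M.1.1 0 0 * (M.1.1 1 1 - 1) := by ring
    have e2 : M.1.1 0 0 * M.1.1 1 1 - 1 = M.1.1 0 1 * M.1.1 1 0 := by
      linear_combination hdet
    rw [e, e2]
    exact A.sub_mem (A.mul_mem_left _ M.2) (A.mul_mem_left _ h11)
  · rintro ⟨-, -, h11⟩
    ext
    show Ideal.Quotient.mk A (M.1.1 1 1) = 1
    rw [← _root_.map_one (Ideal.Quotient.mk A), Ideal.Quotient.mk_eq_mk_iff_sub_mem]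
    exact h11

lemma surjective_gammaZeroToUnits (A : Ideal R) :
    Function.Surjective (gammaZeroToUnits R A) := by
  intro u
  obtain ⟨x, hx⟩ := Ideal.Quotient.mk_surjective (u.val : R ⧸ A)
  obtain ⟨y, hy⟩ := Ideal.Quotient.mk_surjective (u.inv : R ⧸ A)
  have hxy : x * y - 1 ∈ A := by
    rw [← Ideal.Quotient.mk_eq_mk_iff_sub_mem, _root_.map_mul, _root_.map_one, hx, hy]
    exact u.val_inv
  have hdet : (!![y, 1; x*y - 1, x] : Matrix (Fin 2) (Fin 2) R).det = 1 := by
    rw [Matrix.det_fin_two_of]; ring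
  refine ⟨⟨⟨!![y, 1; x*y - 1, x], hdet⟩, ?_⟩, ?_⟩
  · show (!![y, 1; x*y - 1, x] : Matrix (Fin 2) (Fin 2) R) 1 0 ∈ A
    simpa using hxy
  · ext
    show Ideal.Quotient.mk A ((!![y, 1; x*y - 1, x] : Matrix (Fin 2) (Fin 2) R) 1 1) = u.val
    simpa using hx

lemma relindex_gammaOne_gammaZero (A : Ideal R) :
    (GammaOne R A).relIndex (GammaZero R A) = Nat.card ((R ⧸ A)ˣ) := by
  rw [Subgroup.relIndex, ← ker_gammaZeroToUnits, Subgroup.index_ker]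
  rw [MonoidHom.range_eq_top_of_surjective _ (surjective_gammaZeroToUnits R A)]
  exact Nat.card_congr Subgroup.topEquiv.toEquiv

/-- Lemma 2.6 (ii) analogue: for a regular ideal `𝔞` of `𝒪_D`, the index
of `Γ₁^D(𝔞)` in `Γ₀^D(𝔞)` equals `φ^D(𝔞)`, the number of units of `𝒪_D/𝔞`. -/
theorem index_gamma_one_in_gamma_zero (d : ℤ) (hd : 1 ≤ d) (A : Ideal (Od d))
    (hreg : ∃ z ∈ A, ((z : ℤ × ℤ)) ∈ nonZeroDivisors (ℤ × ℤ)) :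
    (GammaOne (Od d) A).relIndex (GammaZero (Od d) A) = Nat.card ((Od d ⧸ A)ˣ) :=
  relindex_gammaOne_gammaZero (Od d) A
end

section
/- Let 𝔞 be a regular ideal of 𝒪_D of finite norm. Then the number of units of 𝒪_D/𝔞 satisfies φ^D(𝔞) = N(𝔞) · ∏_{𝔭 ⊇ 𝔞} (1 − 1/N(𝔭)), where the product runs over all prime ideals 𝔭 of 𝒪_D containing 𝔞 (each such 𝔭 has prime norm N(𝔭)), the equality being of rational numbers. -/
lemma card_units_field (K : Type*) [Field K] : Nat.card Kˣ = Nat.card K - 1 :=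
  Nat.card_units K

/-- Units of a pi type. -/
def piUnitsEquiv {ι : Type*} (K : ι → Type*) [∀ i, Monoid (K i)] :
    (∀ i, K i)ˣ ≃ ∀ i, (K i)ˣ where
  toFun u i := ⟨u.val i, u.inv i, congrFun u.val_inv i, congrFun u.inv_val i⟩
  invFun v := ⟨fun i => (v i).val, fun i => (v i).inv,
    funext fun i => (v i).val_inv, funext fun i => (v i).inv_val⟩
  left_inv _ := Units.ext rfl
  right_inv _ := funext fun _ => Units.ext rfl

lemma card_units_quotient_finite_ring (R : Type*) [CommRing R] [Finite R] :
    (Nat.card Rˣ : ℚ) =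
      (Nat.card R : ℚ) *
        ∏ᶠ P ∈ {P : Ideal R | P.IsPrime}, (1 - 1 / (Nat.card (R ⧸ P) : ℚ)) := by
  classical
  haveI : IsArtinianRing R := inferInstance
  have hnil : IsNilpotent (nilradical R) := IsNoetherianRing.isNilpotent_nilradical R
  set N := nilradical R with hN
  -- primes are maximal
  have hpm : {P : Ideal R | P.IsPrime} = {P : Ideal R | P.IsMaximal} := by
    ext P
    simp only [Set.mem_setOf_eq]
    constructor
    · intro hP
      haveI := hP
      haveI : Finite (R ⧸ P) := Quotient.finite _
      exact Ideal.Quotient.maximal_of_isField _ (Finite.isField_of_domain _)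
    · exact fun hP => hP.isPrime
  haveI : Finite {I : Ideal R | I.IsMaximal} := (IsArtinianRing.setOfPred_isMaximal_finite R).to_subtype
  haveI : Fintype {I : Ideal R | I.IsMaximal} := Fintype.ofFinite _
  letI instF : ∀ I : {I : Ideal R | I.IsMaximal}, Field (R ⧸ I.1) :=
    fun I => @Ideal.Quotient.field R _ I.1 I.2
  haveI : Fintype (MaximalSpectrum R) := Fintype.ofFinite _
  let eMS : MaximalSpectrum R ≃ {I : Ideal R | I.IsMaximal} :=
    ⟨fun I => ⟨I.asIdeal, I.isMaximal⟩, fun I => ⟨I.1, I.2⟩, fun _ => rfl, fun _ => rfl⟩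
  have hq1 : ∀ I : {I : Ideal R | I.IsMaximal}, 1 < Nat.card (R ⧸ I.1) := fun I => by
    haveI : Finite (R ⧸ I.1) := Quotient.finite _
    exact Finite.one_lt_card
  have hqQ : ∀ I : {I : Ideal R | I.IsMaximal}, ((Nat.card (R ⧸ I.1) : ℚ)) ≠ 0 := fun I => by
    have : 0 < Nat.card (R ⧸ I.1) := lt_trans one_pos (hq1 I)
    exact_mod_cast this.ne'
  -- the CRT equivalence
  let e := IsArtinianRing.quotNilradicalEquivPi R
  -- card of quotient by nilradical
  have hS : Nat.card (R ⧸ N) = ∏ I : {I : Ideal R | I.IsMaximal}, Nat.card (R ⧸ I.1) := by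
    rw [Nat.card_congr e.toEquiv, Nat.card_pi]
    exact Fintype.prod_equiv eMS _ _ (fun _ => rfl)
  -- card of units of quotient by nilradical
  have hSu : Nat.card (R ⧸ N)ˣ = ∏ I : {I : Ideal R | I.IsMaximal}, (Nat.card (R ⧸ I.1) - 1) := by
    rw [Nat.card_congr (Units.mapEquiv e.toMulEquiv).toEquiv,
      Nat.card_congr (piUnitsEquiv _), Nat.card_pi]
    exact Fintype.prod_equiv eMS _ _ fun I => @card_units_field _ (@Ideal.Quotient.field R _ I.asIdeal I.isMaximal)
  -- the units surjection
  let φ : Rˣ →* (R ⧸ N)ˣ := Units.map (Ideal.Quotient.mk N : R →+* R ⧸ N).toMonoidHom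
  have hφ : Function.Surjective φ := by
    intro v
    obtain ⟨x, hx⟩ := Ideal.Quotient.mk_surjective (v : R ⧸ N)
    have hu : IsUnit x := (IsNilpotent.isUnit_quotient_mk_iff hnil).mp (hx ▸ v.isUnit)
    exact ⟨hu.unit, Units.ext (by simpa [φ] using hx)⟩
  have memker : ∀ u : Rˣ, u ∈ MonoidHom.ker φ ↔ ((u : R) - 1) ∈ N := by
    intro u
    rw [MonoidHom.mem_ker]
    constructor
    · intro h
      have h1 : (Ideal.Quotient.mk N) (u : R) = 1 := congrArg Units.val h
      rw [← Ideal.Quotient.eq_zero_iff_mem, map_sub, h1, map_one, sub_self]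
    · intro h
      refine Units.ext ?_
      have h0 : (Ideal.Quotient.mk N) ((u : R) - 1) = 0 :=
        Ideal.Quotient.eq_zero_iff_mem.mpr h
      rw [map_sub, map_one, sub_eq_zero] at h0
      simpa [φ] using h0
  have hker : Nat.card (MonoidHom.ker φ) = Nat.card N := by
    let F : MonoidHom.ker φ → N := fun u => ⟨((u : Rˣ) : R) - 1, (memker _).mp u.2⟩
    have hFinj : Function.Injective F := by
      intro u v h
      have h1 : ((u : Rˣ) : R) - 1 = ((v : Rˣ) : R) - 1 := congrArg Subtype.val h
      have : ((u : Rˣ) : R) = ((v : Rˣ) : R) := by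
        have := sub_left_inj.mp h1
        exact this
      exact Subtype.ext (Units.ext this)
    have hFsurj : Function.Surjective F := by
      intro n
      have hu : IsUnit (1 + (n : R)) := IsNilpotent.isUnit_one_add (mem_nilradical.mp n.2)
      refine ⟨⟨hu.unit, (memker _).mpr ?_⟩, ?_⟩
      · simpa [hu.unit_spec] using n.2
      · refine Subtype.ext ?_
        show (hu.unit : R) - 1 = (n : R)
        rw [hu.unit_spec]; ring
    exact Nat.card_congr (Equiv.ofBijective F ⟨hFinj, hFsurj⟩)
  have h1 : Nat.card Rˣ = Nat.card (R ⧸ N)ˣ * Nat.card N := by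
    rw [Subgroup.card_eq_card_quotient_mul_card_subgroup (MonoidHom.ker φ), hker,
      Nat.card_congr (QuotientGroup.quotientKerEquivOfSurjective φ hφ).toEquiv]
  -- additive decomposition of R
  have h2 : Nat.card R = Nat.card (R ⧸ N) * Nat.card N := by
    let ψ : R →+ R ⧸ N := (Ideal.Quotient.mk N : R →+* R ⧸ N).toAddMonoidHom
    have hψ : Function.Surjective ψ := Ideal.Quotient.mk_surjective
    have hk : Nat.card ψ.ker = Nat.card N := by
      refine Nat.card_congr (Equiv.subtypeEquivRight fun x => ?_)
      simp [ψ, AddMonoidHom.mem_ker, Ideal.Quotient.eq_zero_iff_mem]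
    rw [AddSubgroup.card_eq_card_quotient_mul_card_addSubgroup ψ.ker, hk,
      Nat.card_congr (QuotientAddGroup.quotientKerEquivOfSurjective ψ hψ).toEquiv]
  -- rewrite the finprod as a finite product
  have hfin : {P : Ideal R | P.IsMaximal}.Finite := IsArtinianRing.setOfPred_isMaximal_finite R
  have hprod : ∏ᶠ P ∈ {P : Ideal R | P.IsPrime}, (1 - 1 / (Nat.card (R ⧸ P) : ℚ)) =
      ∏ I : {I : Ideal R | I.IsMaximal}, (1 - 1 / (Nat.card (R ⧸ I.1) : ℚ)) := by
    rw [hpm, finprod_mem_eq_finite_toFinset_prod _ hfin]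
    exact (Finset.prod_subtype hfin.toFinset (fun x => by simp) _)
  rw [hprod, h1, h2, hS, hSu]
  push_cast
  rw [Finset.prod_congr rfl fun I _ => Nat.cast_sub (hq1 I).le]
  push_cast
  have key : ∀ I ∈ (Finset.univ : Finset {I : Ideal R | I.IsMaximal}),
      ((Nat.card (R ⧸ I.1) : ℚ) - 1) = (Nat.card (R ⧸ I.1) : ℚ) * (1 - 1 / (Nat.card (R ⧸ I.1) : ℚ)) := fun I _ => by
    rw [mul_sub, mul_one, mul_one_div, div_self (hqQ I)]
  rw [Finset.prod_congr rfl key, Finset.prod_mul_distrib]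
  ring

set_option maxHeartbeats 1000000 in
set_option synthInstance.maxHeartbeats 200000 in
/-- Lemma 2.7, first formula: for a regular ideal `𝔞` of `𝒪_D` of finite
norm, the number of units of `𝒪_D/𝔞` is `φ^D(𝔞) = N(𝔞) · ∏_{𝔭 ⊇ 𝔞 prime} (1 − 1/N(𝔭))`,
as rational numbers. -/
theorem totient_formula (d : ℤ) (hd : 1 ≤ d) (A : Ideal (Od d))
    (hreg : ∃ z ∈ A, ((z : ℤ × ℤ)) ∈ nonZeroDivisors (ℤ × ℤ)) :
    (Nat.card ((Od d ⧸ A)ˣ) : ℚ) =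
      (Nat.card (Od d ⧸ A) : ℚ) *
        ∏ᶠ P ∈ {P : Ideal (Od d) | P.IsPrime ∧ A ≤ P},
          (1 - 1 / (Nat.card (Od d ⧸ P) : ℚ)) := by
  classical
  obtain ⟨z, hzA, hz⟩ := hreg
  set a := (z : ℤ × ℤ).1 with ha'
  set b := (z : ℤ × ℤ).2 with hb'
  have ha : a ≠ 0 := by
    intro h
    have h0 : ((1 : ℤ), (0 : ℤ)) * (z : ℤ × ℤ) = 0 := by
      rw [Prod.mk_mul_mk]
      simp [← ha', h]
    have := (mem_nonZeroDivisors_iff.mp hz).2 _ h0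
    simp [Prod.ext_iff] at this
  have hb : b ≠ 0 := by
    intro h
    have h0 : ((0 : ℤ), (1 : ℤ)) * (z : ℤ × ℤ) = 0 := by
      rw [Prod.mk_mul_mk]
      simp [← hb', h]
    have := (mem_nonZeroDivisors_iff.mp hz).2 _ h0
    simp [Prod.ext_iff] at this
  have hd0 : d ≠ 0 := by omega
  set n : ℕ := (a * b * d).natAbs with hn'
  have hn : n ≠ 0 := Int.natAbs_ne_zero.mpr (mul_ne_zero (mul_ne_zero ha hb) hd0)
  haveI : NeZero n := ⟨hn⟩
  -- the reduction map
  let f : Od d →+* ZMod n × ZMod n :=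
    (RingHom.prodMap (Int.castRingHom (ZMod n)) (Int.castRingHom (ZMod n))).comp
      (Od d).subtype
  -- kernel of f is contained in A
  have hker : RingHom.ker f ≤ A := by
    intro x hx
    have hfx : f x = 0 := hx
    have hx1 : (((x : ℤ × ℤ).1 : ℤ) : ZMod n) = 0 := congrArg Prod.fst hfx
    have hx2 : (((x : ℤ × ℤ).2 : ℤ) : ZMod n) = 0 := congrArg Prod.snd hfx
    have d1 : a * b * d ∣ (x : ℤ × ℤ).1 :=
      Int.natAbs_dvd.mp ((ZMod.intCast_zmod_eq_zero_iff_dvd _ n).mp hx1)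
    have d2 : a * b * d ∣ (x : ℤ × ℤ).2 :=
      Int.natAbs_dvd.mp ((ZMod.intCast_zmod_eq_zero_iff_dvd _ n).mp hx2)
    obtain ⟨u, hu⟩ := d1
    obtain ⟨v, hv⟩ := d2
    have he1 : (⟨(a * b * d, 0), ⟨a * b, by ring⟩⟩ : Od d) ∈ A := by
      have : (⟨(a * b * d, 0), ⟨a * b, by ring⟩⟩ : Od d) =
          z * ⟨(b * d, 0), ⟨b, by ring⟩⟩ := by
        apply Subtype.ext
        show (a * b * d, (0 : ℤ)) = (z : ℤ × ℤ) * (b * d, 0)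
        rw [Prod.mk_mul_mk]
        simp [← ha', ← hb']
        ring
      rw [this]
      exact Ideal.mul_mem_right _ _ hzA
    have he2 : (⟨(0, a * b * d), ⟨-(a * b), by ring⟩⟩ : Od d) ∈ A := by
      have : (⟨(0, a * b * d), ⟨-(a * b), by ring⟩⟩ : Od d) =
          z * ⟨(0, a * d), ⟨-a, by ring⟩⟩ := by
        apply Subtype.ext
        show ((0 : ℤ), a * b * d) = (z : ℤ × ℤ) * (0, a * d)
        rw [Prod.mk_mul_mk]
        simp [← ha', ← hb']
        ring
      rw [this]
      exact Ideal.mul_mem_right _ _ hzA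
    have hxeq : x = (⟨(a * b * d, 0), ⟨a * b, by ring⟩⟩ : Od d) * ⟨(u, u), ⟨0, by ring⟩⟩ +
        (⟨(0, a * b * d), ⟨-(a * b), by ring⟩⟩ : Od d) * ⟨(v, v), ⟨0, by ring⟩⟩ := by
      apply Subtype.ext
      show (x : ℤ × ℤ) = (a * b * d, (0:ℤ)) * (u, u) + ((0:ℤ), a * b * d) * (v, v)
      rw [Prod.mk_mul_mk, Prod.mk_mul_mk, Prod.mk_add_mk]
      have : (x : ℤ × ℤ) = ((x : ℤ × ℤ).1, (x : ℤ × ℤ).2) := rfl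
      rw [this, hu, hv]
      simp
    rw [hxeq]
    exact A.add_mem (Ideal.mul_mem_right _ _ he1) (Ideal.mul_mem_right _ _ he2)
  -- finiteness
  haveI : Finite (Od d ⧸ RingHom.ker f) :=
    Finite.of_injective _ (RingHom.kerLift_injective f)
  haveI : Finite (Od d ⧸ A) := by
    have hs : Function.Surjective (Ideal.Quotient.factor hker) := by
      intro y
      obtain ⟨x, rfl⟩ := Ideal.Quotient.mk_surjective y
      exact ⟨Ideal.Quotient.mk _ x, rfl⟩
    exact Finite.of_surjective _ hs
  -- apply the general formula
  rw [card_units_quotient_finite_ring (Od d ⧸ A)]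
  congr 1
  -- transfer the product through the ideal correspondence
  refine finprod_mem_eq_of_bijOn (fun Q => Ideal.comap (Ideal.Quotient.mk A) Q) ?_ ?_
  · constructor
    · intro Q hQ
      haveI : Q.IsPrime := hQ
      refine ⟨Ideal.comap_isPrime _ _, fun x hx => ?_⟩
      show Ideal.Quotient.mk A x ∈ Q
      rw [Ideal.Quotient.eq_zero_iff_mem.mpr hx]
      exact Q.zero_mem
    · constructor
      · intro Q1 _ Q2 _ h
        have h' : Ideal.comap (Ideal.Quotient.mk A) Q1 = Ideal.comap (Ideal.Quotient.mk A) Q2 := h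
        rw [← Ideal.map_comap_of_surjective _ Ideal.Quotient.mk_surjective Q1, h',
          Ideal.map_comap_of_surjective _ Ideal.Quotient.mk_surjective Q2]
      · intro P hP
        obtain ⟨hPp, hPA⟩ := hP
        haveI : P.IsPrime := hPp
        have hkerP : RingHom.ker (Ideal.Quotient.mk A) ≤ P := by
          rw [Ideal.mk_ker]; exact hPA
        refine ⟨Ideal.map (Ideal.Quotient.mk A) P, ?_, ?_⟩
        · exact Ideal.map_isPrime_of_surjective Ideal.Quotient.mk_surjective hkerP
        · show Ideal.comap (Ideal.Quotient.mk A) (Ideal.map (Ideal.Quotient.mk A) P) = P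
          rw [Ideal.comap_map_of_surjective _ Ideal.Quotient.mk_surjective]
          rw [← RingHom.ker_eq_comap_bot, Ideal.mk_ker]
          exact sup_eq_left.mpr hPA
  · intro Q hQ
    haveI : Q.IsPrime := hQ
    have hle : A ≤ Ideal.comap (Ideal.Quotient.mk A) Q := fun x hx => by
      show Ideal.Quotient.mk A x ∈ Q
      rw [Ideal.Quotient.eq_zero_iff_mem.mpr hx]
      exact Q.zero_mem
    have hmc : Ideal.map (Ideal.Quotient.mk A) (Ideal.comap (Ideal.Quotient.mk A) Q) = Q :=
      Ideal.map_comap_of_surjective _ Ideal.Quotient.mk_surjective Q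
    have : Nat.card ((Od d ⧸ A) ⧸ Q) =
        Nat.card (Od d ⧸ Ideal.comap (Ideal.Quotient.mk A) Q) := by
      refine Nat.card_congr ?_
      have e := DoubleQuot.quotQuotEquivQuotOfLE hle
      rw [hmc] at e
      exact e.toEquiv
    rw [this]
end

section
/- Let p be a prime number and let H be a subgroup of GL₂(𝔽_p). Let H⁺ be the subgroup of H generated by the set X = {x ∈ H : x^p = 1}. Then the order of H⁺ is either 1, or p, or p³ − p. -/
open Matrix

namespace NoriAux
variable {F : Type*} [Field F]




/-- Cayley–Hamilton for 2×2 matrices, by hand. -/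
lemma CH2 (M : Matrix (Fin 2) (Fin 2) F) :
    M * M = (M 0 0 + M 1 1) • M - (M 0 0 * M 1 1 - M 0 1 * M 1 0) • (1 : Matrix (Fin 2) (Fin 2) F) := by
  ext i j
  fin_cases i <;> fin_cases j <;>
    simp [Matrix.mul_apply, Fin.sum_univ_two, Matrix.one_apply] <;> ring

/-- A 2×2 matrix with zero determinant and vanishing `p`-th power (`p ≥ 1`) squares to zero. -/
lemma sq_zero_of_pow_eq_zero {M : Matrix (Fin 2) (Fin 2) F} {k : ℕ}
    (hdet : M.det = 0) (hpow : M ^ (k + 1) = 0) : M * M = 0 := by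
  have htr : M * M = (M 0 0 + M 1 1) • M := by
    rw [CH2 M]
    rw [Matrix.det_fin_two] at hdet
    rw [hdet]
    simp
  set t := M 0 0 + M 1 1 with ht
  have key : ∀ m : ℕ, M ^ (m + 1) = t ^ m • M := by
    intro m
    induction m with
    | zero => simp
    | succ n ih =>
      rw [pow_succ, ih, Matrix.smul_mul, htr, smul_smul, pow_succ]
  rcases eq_or_ne M 0 with h | h
  · rw [h, mul_zero]
  · rcases eq_or_ne k 0 with hk | hk
    · subst hk; simp at hpow; exact absurd hpow h
    · obtain ⟨m, rfl⟩ := Nat.exists_eq_succ_of_ne_zero hk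
      have h2 : t ^ (m + 1) • M = 0 := by rw [← key]; exact hpow
      have : t ^ (m + 1) = 0 := by
        by_contra h3
        exact h (by simpa [h3] using congrArg (fun X => (t ^ (m+1))⁻¹ • X) h2)
      have ht0 : t = 0 := pow_eq_zero_iff (Nat.succ_ne_zero m) |>.1 this
      rw [htr, ht0, zero_smul]

/-- Rank-one decomposition of a nonzero square-zero 2×2 matrix. -/
lemma sqz_decomp {M : Matrix (Fin 2) (Fin 2) F} (hM : M ≠ 0) (h2 : M * M = 0) :
    ∃ v w : Fin 2 → F, v ≠ 0 ∧ w ≠ 0 ∧ (∀ i j, M i j = v i * w j) ∧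
      w 0 * v 0 + w 1 * v 1 = 0 := by
  set a := M 0 0; set b := M 0 1; set c := M 1 0; set d := M 1 1
  have e00 : a * a + b * c = 0 := by
    have := congrFun (congrFun h2 0) 0
    simpa [Matrix.mul_apply, Fin.sum_univ_two] using this
  have e01 : a * b + b * d = 0 := by
    have := congrFun (congrFun h2 0) 1
    simpa [Matrix.mul_apply, Fin.sum_univ_two] using this
  have e10 : c * a + d * c = 0 := by
    have := congrFun (congrFun h2 1) 0
    simpa [Matrix.mul_apply, Fin.sum_univ_two] using this
  have e11 : c * b + d * d = 0 := by
    have := congrFun (congrFun h2 1) 1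
    simpa [Matrix.mul_apply, Fin.sum_univ_two] using this
  have htr : d = -a := by
    by_contra hda
    have had : a + d ≠ 0 := fun h => hda (by linear_combination h)
    have hb : b = 0 := by
      rcases mul_eq_zero.1 (show b * (a + d) = 0 by linear_combination e01) with h | h
      · exact h
      · exact absurd h had
    have hc : c = 0 := by
      rcases mul_eq_zero.1 (show c * (a + d) = 0 by linear_combination e10) with h | h
      · exact h
      · exact absurd h had
    have ha : a = 0 := by
      have : a * a = 0 := by linear_combination e00 - c * hb
      exact (mul_self_eq_zero).1 this
    have hd : d = 0 := by
      have : d * d = 0 := by linear_combination e11 - b * hc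
      exact (mul_self_eq_zero).1 this
    exact had (by rw [ha, hd, add_zero])
  rcases eq_or_ne c 0 with hc | hc
  · have ha : a = 0 := by
      have : a * a = 0 := by linear_combination e00 - b * hc
      exact (mul_self_eq_zero).1 this
    have hd : d = 0 := by rw [htr, ha, neg_zero]
    have hb : b ≠ 0 := by
      intro hb
      apply hM
      ext i j
      fin_cases i <;> fin_cases j <;> assumption
    refine ⟨![1, 0], ![0, b], ?_, ?_, ?_, by simp⟩
    · exact Function.ne_iff.2 ⟨0, by simp⟩
    · exact Function.ne_iff.2 ⟨1, by simpa using hb⟩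
    · intro i j
      fin_cases i <;> fin_cases j
      · show a = 1 * 0; rw [ha, mul_zero]
      · show b = 1 * b; rw [one_mul]
      · show c = 0 * 0; rw [hc, mul_zero]
      · show d = 0 * b; rw [hd, zero_mul]
  · refine ⟨![a, c], ![1, -a / c], ?_, ?_, ?_, by simp [hc]⟩
    · exact Function.ne_iff.2 ⟨1, by simpa using hc⟩
    · exact Function.ne_iff.2 ⟨0, by norm_num⟩
    · intro i j
      fin_cases i <;> fin_cases j
      · show a = a * 1; ring
      · show b = a * (-a / c)
        rw [mul_div_assoc', eq_div_iff hc]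
        linear_combination e00
      · show c = c * 1; ring
      · show d = c * (-a / c)
        rw [htr, mul_comm, div_mul_cancel₀ _ hc]






lemma dep_of_cross (a b : Fin 2 → F) (hcross : a 0 * b 1 - a 1 * b 0 = 0) (hb0 : b ≠ 0) :
    ∃ c : F, a = c • b := by
  rcases Function.ne_iff.1 hb0 with ⟨i, hi⟩
  fin_cases i
  · have hi' : b 0 ≠ 0 := by simpa using hi
    refine ⟨a 0 / b 0, funext fun j => ?_⟩
    fin_cases j
    · show a 0 = a 0 / b 0 * b 0
      rw [div_mul_cancel₀ _ hi']
    · show a 1 = a 0 / b 0 * b 1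
      field_simp
      linear_combination -hcross
  · have hi' : b 1 ≠ 0 := by simpa using hi
    refine ⟨a 1 / b 1, funext fun j => ?_⟩
    fin_cases j
    · show a 0 = a 1 / b 1 * b 0
      field_simp
      linear_combination hcross
    · show a 1 = a 1 / b 1 * b 1
      rw [div_mul_cancel₀ _ hi']

lemma dep2 (v a b : Fin 2 → F) (hv : v ≠ 0)
    (ha : a 0 * v 0 + a 1 * v 1 = 0) (hb : b 0 * v 0 + b 1 * v 1 = 0) (hb0 : b ≠ 0) :
    ∃ c : F, a = c • b := by
  apply dep_of_cross a b _ hb0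
  have h0 : (a 0 * b 1 - a 1 * b 0) * v 0 = 0 := by linear_combination b 1 * ha - a 1 * hb
  have h1 : (a 0 * b 1 - a 1 * b 0) * v 1 = 0 := by linear_combination a 0 * hb - b 0 * ha
  rcases Function.ne_iff.1 hv with ⟨i, hi⟩
  fin_cases i
  · exact (mul_eq_zero.1 h0).resolve_right hi
  · exact (mul_eq_zero.1 h1).resolve_right hi

lemma prop_of_dep {N M : Matrix (Fin 2) (Fin 2) F} {vN wN vM wM : Fin 2 → F}
    (hN : ∀ i j, N i j = vN i * wN j) (hM : ∀ i j, M i j = vM i * wM j)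
    (orthN : wN 0 * vN 0 + wN 1 * vN 1 = 0) (orthM : wM 0 * vM 0 + wM 1 * vM 1 = 0)
    (hvM : vM ≠ 0) (hwN : wN ≠ 0)
    (hdep : ∃ lam : F, vM = lam • vN) : ∃ c : F, M = c • N := by
  obtain ⟨lam, hlam⟩ := hdep
  have hlam0 : lam ≠ 0 := by
    rintro rfl
    rw [zero_smul] at hlam
    exact hvM hlam
  have horth : wM 0 * vN 0 + wM 1 * vN 1 = 0 := by
    have : lam * (wM 0 * vN 0 + wM 1 * vN 1) = 0 := by
      have h0 : vM 0 = lam * vN 0 := by rw [hlam]; rfl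
      have h1 : vM 1 = lam * vN 1 := by rw [hlam]; rfl
      linear_combination orthM - wM 0 * h0 - wM 1 * h1
    exact (mul_eq_zero.1 this).resolve_left hlam0
  obtain ⟨mu, hmu⟩ := dep2 vN wM wN (by
      rintro rfl
      simp only [Pi.zero_apply, mul_zero, add_zero] at horth
      exact hvM (by
        rw [hlam]
        ext i
        simp)) horth (by linear_combination orthN) hwN
  refine ⟨lam * mu, ?_⟩
  ext i j
  have h1 : vM i = lam * vN i := by rw [hlam]; rfl
  have h2 : wM j = mu * wN j := by rw [hmu]; rfl
  rw [Matrix.smul_apply, smul_eq_mul, hM, hN, h1, h2]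
  ring

/-- Given two non-proportional nonzero square-zero matrices, find a common conjugating
matrix turning them into (multiples of) the two elementary nilpotents. -/
lemma setup {N M : Matrix (Fin 2) (Fin 2) F}
    (hN0 : N ≠ 0) (hM0 : M ≠ 0) (hN2 : N * N = 0) (hM2 : M * M = 0)
    (hnp : ∀ c : F, M ≠ c • N) :
    ∃ g : GL (Fin 2) F, ∃ s t : F, s ≠ 0 ∧ t ≠ 0 ∧
      N * (g : Matrix (Fin 2) (Fin 2) F) =
        (g : Matrix (Fin 2) (Fin 2) F) * (s • !![0, 1; 0, 0]) ∧
      M * (g : Matrix (Fin 2) (Fin 2) F) =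
        (g : Matrix (Fin 2) (Fin 2) F) * (t • !![0, 0; 1, 0]) := by
  obtain ⟨vN, wN, hvN, hwN, hNe, orthN⟩ := sqz_decomp hN0 hN2
  obtain ⟨vM, wM, hvM, hwM, hMe, orthM⟩ := sqz_decomp hM0 hM2
  have hdep : ¬∃ lam : F, vM = lam • vN := by
    intro hdep
    obtain ⟨c, hc⟩ := prop_of_dep hNe hMe orthN orthM hvM hwN hdep
    exact hnp c hc
  set g0 : Matrix (Fin 2) (Fin 2) F := !![vN 0, vM 0; vN 1, vM 1] with hg0
  have hdet : g0.det ≠ 0 := by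
    intro h
    rw [Matrix.det_fin_two] at h
    apply hdep
    obtain ⟨c, hc⟩ := dep_of_cross vM vN (by
      simp only [hg0, Matrix.cons_val', Matrix.cons_val_zero, Matrix.cons_val_one,
        Matrix.head_cons, Matrix.head_fin_const, Matrix.of_apply, Matrix.empty_val',
        Matrix.cons_val_fin_one] at h
      linear_combination -h) hvN
    exact ⟨c, hc⟩
  set s : F := wN 0 * vM 0 + wN 1 * vM 1 with hs_def
  set t : F := wM 0 * vN 0 + wM 1 * vN 1 with ht_def
  have hs : s ≠ 0 := by
    intro h
    obtain ⟨c, hc⟩ := dep2 wN vM vN hwN (by linear_combination h) (by linear_combination orthN) hvN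
    exact hdep ⟨c, hc⟩
  have ht : t ≠ 0 := by
    intro h
    obtain ⟨c, hc⟩ := dep2 wM vN vM hwM (by linear_combination h) (by linear_combination orthM) hvM
    have hc0 : c ≠ 0 := by
      rintro rfl
      rw [zero_smul] at hc
      exact hvN hc
    refine hdep ⟨c⁻¹, ?_⟩
    rw [hc, smul_smul, inv_mul_cancel₀ hc0, one_smul]
  refine ⟨Matrix.GeneralLinearGroup.mkOfDetNeZero g0 hdet, s, t, hs, ht, ?_, ?_⟩
  · show N * g0 = g0 * (s • !![0, 1; 0, 0])
    ext i j
    fin_cases i <;> fin_cases j <;>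
      simp [hg0, Matrix.mul_apply, Fin.sum_univ_two, hNe]
    · linear_combination vN 0 * orthN
    · linear_combination
    · linear_combination vN 1 * orthN
    · linear_combination
  · show M * g0 = g0 * (t • !![0, 0; 1, 0])
    ext i j
    fin_cases i <;> fin_cases j <;>
      simp [hg0, Matrix.mul_apply, Fin.sum_univ_two, hMe]
    · linear_combination
    · linear_combination vM 0 * orthM
    · linear_combination
    · linear_combination vM 1 * orthM






lemma unip_mul {N : Matrix (Fin 2) (Fin 2) F} (h : N * N = 0) (s t : F) :
    (1 + s • N) * (1 + t • N) = 1 + (s + t) • N := by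
  have hsq : (s • N) * (t • N) = 0 := by
    rw [smul_mul_assoc, mul_smul_comm, h, smul_zero, smul_zero]
  rw [add_mul, one_mul, mul_add, mul_one, hsq, add_zero, add_smul]
  abel

/-- The unit `1 + c • N` for a square-zero `N`. -/
def uu (N : Matrix (Fin 2) (Fin 2) F) (h : N * N = 0) (c : F) : GL (Fin 2) F :=
  ⟨1 + c • N, 1 + (-c) • N,
    by rw [unip_mul h]; simp,
    by rw [unip_mul h]; simp⟩

@[simp] lemma uu_coe (N : Matrix (Fin 2) (Fin 2) F) (h : N * N = 0) (c : F) :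
    (uu N h c : Matrix (Fin 2) (Fin 2) F) = 1 + c • N := rfl

/-- The homomorphism `c ↦ 1 + c • N`. -/
def phi (N : Matrix (Fin 2) (Fin 2) F) (h : N * N = 0) : Multiplicative F →* GL (Fin 2) F where
  toFun c := uu N h (Multiplicative.toAdd c)
  map_one' := by
    apply Units.ext
    show 1 + (Multiplicative.toAdd (1 : Multiplicative F)) • N = 1
    simp
  map_mul' x y := by
    apply Units.ext
    show (1 + (Multiplicative.toAdd (x * y)) • N) = (1 + _ • N) * (1 + _ • N)
    rw [unip_mul h]
    rfl

lemma phi_injective {N : Matrix (Fin 2) (Fin 2) F} (h : N * N = 0) (hN : N ≠ 0) :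
    Function.Injective (phi N h) := by
  intro x y hxy
  have := congrArg (fun u => ((u : GL (Fin 2) F) : Matrix (Fin 2) (Fin 2) F)) hxy
  simp only [phi, MonoidHom.coe_mk, OneHom.coe_mk, uu_coe] at this
  have h2 : (Multiplicative.toAdd x - Multiplicative.toAdd y) • N = 0 := by
    have := sub_eq_zero.2 this
    rw [add_sub_add_left_eq_sub, ← sub_smul] at this
    exact this
  rcases smul_eq_zero.1 h2 with h3 | h3
  · exact Multiplicative.toAdd.injective (sub_eq_zero.1 h3)
  · exact absurd h3 hN

lemma pow_unip {N : Matrix (Fin 2) (Fin 2) F} (h : N * N = 0) (k : ℕ) :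
    (1 + N) ^ k = 1 + (k : F) • N := by
  induction k with
  | zero => simp
  | succ n ih =>
    rw [pow_succ, ih]
    have : (1 : Matrix (Fin 2) (Fin 2) F) + N = 1 + (1 : F) • N := by rw [one_smul]
    rw [this, unip_mul h]
    push_cast
    ring_nf






/-- Elementary matrix `[[1,t],[0,1]]` as a unit. -/
def E12 (t : F) : GL (Fin 2) F :=
  ⟨!![1, t; 0, 1], !![1, -t; 0, 1],
    by rw [Matrix.mul_fin_two, Matrix.one_fin_two]; norm_num,
    by rw [Matrix.mul_fin_two, Matrix.one_fin_two]; norm_num⟩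

/-- Elementary matrix `[[1,0],[t,1]]` as a unit. -/
def E21 (t : F) : GL (Fin 2) F :=
  ⟨!![1, 0; t, 1], !![1, 0; -t, 1],
    by rw [Matrix.mul_fin_two, Matrix.one_fin_two]; norm_num,
    by rw [Matrix.mul_fin_two, Matrix.one_fin_two]; norm_num⟩

@[simp] lemma E12_coe (t : F) : (E12 t : Matrix (Fin 2) (Fin 2) F) = !![1, t; 0, 1] := rfl
@[simp] lemma E21_coe (t : F) : (E21 t : Matrix (Fin 2) (Fin 2) F) = !![1, 0; t, 1] := rfl

lemma E21_zero : E21 (0 : F) = 1 := by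
  apply Units.ext
  show (!![1, 0; (0:F), 1]) = 1
  rw [Matrix.one_fin_two]

lemma E21_mul (s t : F) : E21 s * E21 t = E21 (s + t) := by
  apply Units.ext
  show (E21 s : Matrix (Fin 2) (Fin 2) F) * E21 t = E21 (s + t)
  rw [E21_coe, E21_coe, E21_coe, Matrix.mul_fin_two]
  norm_num [add_comm]

/-- The generating set of elementary unipotent matrices. -/
def Egen : Set (GL (Fin 2) F) := {y | (∃ t, y = E12 t) ∨ (∃ t, y = E21 t)}

lemma mem_closure_Egen_of_ne (X : GL (Fin 2) F)
    (hc : (X : Matrix (Fin 2) (Fin 2) F) 1 0 ≠ 0)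
    (hdet : (X : Matrix (Fin 2) (Fin 2) F).det = 1) :
    X ∈ Subgroup.closure (Egen (F := F)) := by
  set a := (X : Matrix (Fin 2) (Fin 2) F) 0 0 with ha
  set b := (X : Matrix (Fin 2) (Fin 2) F) 0 1 with hb
  set c := (X : Matrix (Fin 2) (Fin 2) F) 1 0 with hcc
  set d := (X : Matrix (Fin 2) (Fin 2) F) 1 1 with hd
  have hdet' : a * d - b * c = 1 := by rw [Matrix.det_fin_two] at hdet; exact hdet
  have hX : X = E12 ((a - 1) / c) * E21 c * E12 ((d - 1) / c) := by
    apply Units.ext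
    show (X : Matrix (Fin 2) (Fin 2) F) = _
    rw [Units.val_mul, Units.val_mul, E12_coe, E21_coe, E12_coe,
      Matrix.mul_fin_two, Matrix.mul_fin_two]
    ext i j
    fin_cases i <;> fin_cases j <;> simp
    · rw [← ha]; field_simp; ring
    · rw [← hb]; field_simp
      linear_combination -hdet'
    · exact hcc.symm
    · rw [← hd, mul_div_assoc', mul_div_cancel_left₀ _ hc]; ring
  rw [hX]
  exact Subgroup.mul_mem _
    (Subgroup.mul_mem _ (Subgroup.subset_closure (Or.inl ⟨_, rfl⟩))
      (Subgroup.subset_closure (Or.inr ⟨_, rfl⟩)))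
    (Subgroup.subset_closure (Or.inl ⟨_, rfl⟩))

lemma mem_closure_Egen (X : GL (Fin 2) F)
    (hdet : (X : Matrix (Fin 2) (Fin 2) F).det = 1) :
    X ∈ Subgroup.closure (Egen (F := F)) := by
  rcases eq_or_ne ((X : Matrix (Fin 2) (Fin 2) F) 1 0) 0 with hc | hc
  · have hd : (X : Matrix (Fin 2) (Fin 2) F) 0 0 *
        (X : Matrix (Fin 2) (Fin 2) F) 1 1 = 1 := by
      rw [Matrix.det_fin_two, hc] at hdet
      linear_combination hdet
    have hdne : (X : Matrix (Fin 2) (Fin 2) F) 1 1 ≠ 0 := by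
      intro h; rw [h, mul_zero] at hd; exact one_ne_zero hd.symm
    have hY : ((X * E21 (1:F) : GL (Fin 2) F) : Matrix (Fin 2) (Fin 2) F) 1 0 ≠ 0 := by
      have : ((X * E21 (1:F) : GL (Fin 2) F) : Matrix (Fin 2) (Fin 2) F) 1 0 =
          (X : Matrix (Fin 2) (Fin 2) F) 1 1 := by
        rw [Units.val_mul, E21_coe]
        simp [Matrix.mul_apply, Fin.sum_univ_two, hc]
      rw [this]; exact hdne
    have hYdet : ((X * E21 (1:F) : GL (Fin 2) F) : Matrix (Fin 2) (Fin 2) F).det = 1 := by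
      rw [Units.val_mul, Matrix.det_mul, hdet, E21_coe, Matrix.det_fin_two]
      norm_num
    have hmem := mem_closure_Egen_of_ne (X * E21 (1:F)) hY hYdet
    have : X = (X * E21 (1:F)) * E21 (-1 : F) := by
      rw [mul_assoc, E21_mul, show (1:F) + -1 = 0 by ring, E21_zero, mul_one]
    rw [this]
    exact Subgroup.mul_mem _ hmem (Subgroup.subset_closure (Or.inr ⟨_, rfl⟩))
  · exact mem_closure_Egen_of_ne X hc hdet


section Main

variable {p : ℕ} [Fact p.Prime]

local notation "Fp" => ZMod p
local notation "GLp" => Matrix.GeneralLinearGroup (Fin 2) (ZMod p)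

lemma sq_of_pow (x : GLp) (hx : x ^ p = 1) :
    ((x : Matrix (Fin 2) (Fin 2) Fp) - 1) * ((x : Matrix (Fin 2) (Fin 2) Fp) - 1) = 0 := by
  have hp' : p.Prime := Fact.out
  have hxm : (x : Matrix (Fin 2) (Fin 2) Fp) ^ p = 1 := by
    rw [← Units.val_pow_eq_pow_val, hx, Units.val_one]
  have hNp : ((x : Matrix (Fin 2) (Fin 2) Fp) - 1) ^ p = 0 := by
    rw [sub_pow_char_of_commute _ (Commute.one_right _), hxm, one_pow, sub_self]
  have hdet : ((x : Matrix (Fin 2) (Fin 2) Fp) - 1).det = 0 := by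
    have h := congrArg Matrix.det hNp
    rw [Matrix.det_pow, Matrix.det_zero] at h
    exact pow_eq_zero_iff hp'.ne_zero |>.1 h
  obtain ⟨k, hk⟩ : ∃ k, p = k + 1 := ⟨p - 1, (Nat.succ_pred_eq_of_pos hp'.pos).symm⟩
  exact sq_zero_of_pow_eq_zero hdet (by rw [← hk]; exact hNp)

lemma det_of_pow (x : GLp) (hx : x ^ p = 1) : Matrix.GeneralLinearGroup.det x = 1 := by
  have hp' : p.Prime := Fact.out
  set d := Matrix.GeneralLinearGroup.det x with hd
  have h1 : d ^ p = 1 := by rw [hd, ← map_pow, hx, _root_.map_one]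
  have h2 : d ^ (p - 1) = 1 := ZMod.units_pow_card_sub_one_eq_one p d
  have h3 : (p - 1) + 1 = p := Nat.succ_pred_eq_of_pos hp'.pos
  have h4 : d ^ (p - 1 + 1) = d := by rw [pow_succ, h2, one_mul]
  rw [h3] at h4
  exact h4.symm.trans h1

lemma card_ker_det :
    Nat.card (Matrix.GeneralLinearGroup.det :
      GLp →* (ZMod p)ˣ).ker = p ^ 3 - p := by
  have hp' : p.Prime := Fact.out
  have hsurj : Function.Surjective
      (Matrix.GeneralLinearGroup.det : GLp →* (ZMod p)ˣ) := by
    intro a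
    have hdet : (!![(a : Fp), 0; 0, 1]).det ≠ 0 := by
      rw [Matrix.det_fin_two_of]
      simp [a.ne_zero]
    refine ⟨Matrix.GeneralLinearGroup.mkOfDetNeZero _ hdet, Units.ext ?_⟩
    show (!![(a : Fp), 0; 0, 1]).det = (a : Fp)
    rw [Matrix.det_fin_two_of]
    ring
  have hrange : (Matrix.GeneralLinearGroup.det : GLp →* (ZMod p)ˣ).range = ⊤ :=
    MonoidHom.range_eq_top.2 hsurj
  have hindex := Subgroup.index_ker (Matrix.GeneralLinearGroup.det : GLp →* (ZMod p)ˣ)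
  rw [hrange] at hindex
  have htop : Nat.card (⊤ : Subgroup (ZMod p)ˣ) = p - 1 := by
    rw [Subgroup.card_top, Nat.card_eq_fintype_card, ZMod.card_units]
  have hcard := Subgroup.card_mul_index
    (Matrix.GeneralLinearGroup.det : GLp →* (ZMod p)ˣ).ker
  rw [hindex, htop] at hcard
  have hGL : Nat.card GLp = (p ^ 2 - 1) * (p ^ 2 - p) := by
    rw [Matrix.card_GL_field]
    simp [Fin.prod_univ_two, ZMod.card]
  rw [hGL] at hcard
  have harith : (p ^ 2 - 1) * (p ^ 2 - p) = (p ^ 3 - p) * (p - 1) := by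
    have h1 : 1 ≤ p := hp'.pos
    have h2 : p ≤ p ^ 2 := by nlinarith
    have h3 : 1 ≤ p ^ 2 := by nlinarith
    have h4 : p ≤ p ^ 3 := by nlinarith
    zify [h1, h2, h3, h4]
    ring
  rw [harith] at hcard
  have hpos : 0 < p - 1 := by
    have := hp'.two_le; omega
  exact Nat.eq_of_mul_eq_mul_right hpos hcard

end Main


end NoriAux

/-- Corollary 2.10, after Nori: for a prime `p` and a subgroup `H` of
`GL₂(𝔽_p)`, the subgroup `H⁺` generated by the elements `x ∈ H` with `x^p = 1` has order
`1`, `p`, or `p³ − p`. -/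
theorem nori_corollary (p : ℕ) (hp : p.Prime)
    (H : Subgroup (Matrix.GeneralLinearGroup (Fin 2) (ZMod p))) :
    Nat.card (Subgroup.closure
        {x : Matrix.GeneralLinearGroup (Fin 2) (ZMod p) | x ∈ H ∧ x ^ p = 1}) = 1 ∨
      Nat.card (Subgroup.closure
        {x : Matrix.GeneralLinearGroup (Fin 2) (ZMod p) | x ∈ H ∧ x ^ p = 1}) = p ∨
      Nat.card (Subgroup.closure
        {x : Matrix.GeneralLinearGroup (Fin 2) (ZMod p) | x ∈ H ∧ x ^ p = 1}) = p ^ 3 - p := by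
  haveI := Fact.mk hp
  set S : Set (Matrix.GeneralLinearGroup (Fin 2) (ZMod p)) :=
    {x | x ∈ H ∧ x ^ p = 1} with hS
  set C : Subgroup (Matrix.GeneralLinearGroup (Fin 2) (ZMod p)) :=
    Subgroup.closure S with hC
  by_cases hall : ∀ x ∈ S, x = 1
  · left
    have hbot : C = ⊥ := by
      rw [eq_bot_iff, hC]
      apply (Subgroup.closure_le ⊥).2
      intro x hx
      rw [SetLike.mem_coe, Subgroup.mem_bot]
      exact hall x hx
    rw [hbot]
    exact Subgroup.card_bot
  · push_neg at hall
    obtain ⟨u, huS, hu1⟩ := hall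
    set N : Matrix (Fin 2) (Fin 2) (ZMod p) :=
      (u : Matrix (Fin 2) (Fin 2) (ZMod p)) - 1 with hNdef
    have hN2 : N * N = 0 := NoriAux.sq_of_pow u huS.2
    have hN0 : N ≠ 0 := fun h => hu1 (Units.ext (sub_eq_zero.1 h))
    have hu_coe : (u : Matrix (Fin 2) (Fin 2) (ZMod p)) = 1 + N := by rw [hNdef]; abel
    -- powers of unipotent elements of `C` stay in `C`
    have key : ∀ (x : Matrix.GeneralLinearGroup (Fin 2) (ZMod p))
        (K : Matrix (Fin 2) (Fin 2) (ZMod p)) (hK2 : K * K = 0), x ∈ C →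
        (x : Matrix (Fin 2) (Fin 2) (ZMod p)) = 1 + K →
        ∀ c : ZMod p, NoriAux.uu K hK2 c ∈ C := by
      intro x K hK2 hxC hx c
      obtain ⟨k, hk⟩ := ZMod.natCast_zmod_surjective (n := p) c
      have hxk : NoriAux.uu K hK2 c = x ^ k := by
        apply Units.ext
        rw [NoriAux.uu_coe, Units.val_pow_eq_pow_val, hx, NoriAux.pow_unip hK2, hk]
      rw [hxk]
      exact pow_mem hxC k
    have huC : u ∈ C := Subgroup.subset_closure huS
    by_cases hprop : ∀ y ∈ S, ∃ c : ZMod p,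
        (y : Matrix (Fin 2) (Fin 2) (ZMod p)) = 1 + c • N
    · -- everything lies in a single unipotent one-parameter subgroup
      have hCP : C ≤ (NoriAux.phi N hN2).range := by
        rw [hC]
        apply (Subgroup.closure_le _).2
        intro y hy
        obtain ⟨c, hc⟩ := hprop y hy
        exact ⟨Multiplicative.ofAdd c, Units.ext hc.symm⟩
      have hcardP : Nat.card (NoriAux.phi N hN2).range = p := by
        have e1 := MonoidHom.ofInjective (NoriAux.phi_injective hN2 hN0)
        rw [← Nat.card_congr e1.toEquiv, Nat.card_congr Multiplicative.toAdd, Nat.card_zmod]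
      have hdvd := Subgroup.card_dvd_of_le hCP
      rw [hcardP] at hdvd
      rcases hp.eq_one_or_self_of_dvd _ hdvd with h | h
      · left; exact h
      · right; left; exact h
    · right; right
      push_neg at hprop
      obtain ⟨v, hvS, hvne⟩ := hprop
      set M : Matrix (Fin 2) (Fin 2) (ZMod p) :=
        (v : Matrix (Fin 2) (Fin 2) (ZMod p)) - 1 with hMdef
      have hM2 : M * M = 0 := NoriAux.sq_of_pow v hvS.2
      have hv_coe : (v : Matrix (Fin 2) (Fin 2) (ZMod p)) = 1 + M := by rw [hMdef]; abel
      have hM0 : M ≠ 0 := by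
        intro h
        refine hvne 0 ?_
        rw [hv_coe, h, zero_smul]
      have hnp : ∀ c : ZMod p, M ≠ c • N := by
        intro c h
        exact hvne c (by rw [hv_coe, h])
      have hvC : v ∈ C := Subgroup.subset_closure hvS
      obtain ⟨g, s, t, hs, ht, hNg, hMg⟩ := NoriAux.setup hN0 hM0 hN2 hM2 hnp
      -- the closure of the elementary subgroups is contained in the conjugate of `C`
      have hmapE : Subgroup.closure (NoriAux.Egen (F := ZMod p)) ≤
          Subgroup.map (MulAut.conj g⁻¹).toMonoidHom C := by
        apply (Subgroup.closure_le _).2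
        rintro y (⟨β, rfl⟩ | ⟨β, rfl⟩)
        · refine ⟨NoriAux.uu N hN2 (β / s), key u N hN2 huC hu_coe (β / s), ?_⟩
          have hcomm : NoriAux.uu N hN2 (β / s) * g = g * NoriAux.E12 β := by
            apply Units.ext
            rw [Units.val_mul, Units.val_mul, NoriAux.uu_coe]
            have hE : (NoriAux.E12 β : Matrix (Fin 2) (Fin 2) (ZMod p)) =
                1 + β • !![0, 1; 0, 0] := by
              rw [NoriAux.E12_coe]
              ext i j
              fin_cases i <;> fin_cases j <;> simp [Matrix.one_apply]
            rw [hE, add_mul, one_mul, smul_mul_assoc, hNg, mul_add, mul_one,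
              mul_smul_comm, mul_smul_comm, smul_smul, div_mul_cancel₀ _ hs]
          show (MulAut.conj g⁻¹) (NoriAux.uu N hN2 (β / s)) = NoriAux.E12 β
          rw [MulAut.conj_apply, inv_inv, mul_assoc, hcomm, ← mul_assoc,
            inv_mul_cancel, one_mul]
        · refine ⟨NoriAux.uu M hM2 (β / t), key v M hM2 hvC hv_coe (β / t), ?_⟩
          have hcomm : NoriAux.uu M hM2 (β / t) * g = g * NoriAux.E21 β := by
            apply Units.ext
            rw [Units.val_mul, Units.val_mul, NoriAux.uu_coe]
            have hE : (NoriAux.E21 β : Matrix (Fin 2) (Fin 2) (ZMod p)) =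
                1 + β • !![0, 0; 1, 0] := by
              rw [NoriAux.E21_coe]
              ext i j
              fin_cases i <;> fin_cases j <;> simp [Matrix.one_apply]
            rw [hE, add_mul, one_mul, smul_mul_assoc, hMg, mul_add, mul_one,
              mul_smul_comm, mul_smul_comm, smul_smul, div_mul_cancel₀ _ ht]
          show (MulAut.conj g⁻¹) (NoriAux.uu M hM2 (β / t)) = NoriAux.E21 β
          rw [MulAut.conj_apply, inv_inv, mul_assoc, hcomm, ← mul_assoc,
            inv_mul_cancel, one_mul]
      -- C equals the kernel of the determinant
      have hCker : C = (Matrix.GeneralLinearGroup.det :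
          Matrix.GeneralLinearGroup (Fin 2) (ZMod p) →* (ZMod p)ˣ).ker := by
        apply le_antisymm
        · rw [hC]
          apply (Subgroup.closure_le _).2
          intro x hx
          rw [SetLike.mem_coe, MonoidHom.mem_ker]
          exact NoriAux.det_of_pow x hx.2
        · intro A hA
          have hA1 : Matrix.GeneralLinearGroup.det A = 1 := MonoidHom.mem_ker.1 hA
          have hdetB : Matrix.GeneralLinearGroup.det (g⁻¹ * A * g) = 1 := by
            rw [_root_.map_mul, _root_.map_mul, hA1, mul_one, ← _root_.map_mul, inv_mul_cancel, _root_.map_one]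
          have hdetB' : ((g⁻¹ * A * g :
              Matrix.GeneralLinearGroup (Fin 2) (ZMod p)) :
              Matrix (Fin 2) (Fin 2) (ZMod p)).det = 1 := by
            have := congrArg Units.val hdetB
            exact this
          have hmem := hmapE (NoriAux.mem_closure_Egen _ hdetB')
          obtain ⟨y, hyC, hy⟩ := hmem
          have hy' : g⁻¹ * y * g = g⁻¹ * A * g := by
            rw [MulEquiv.coe_toMonoidHom, MulAut.conj_apply, inv_inv] at hy
            exact hy
          have hyA : y = A := mul_left_cancel (mul_right_cancel hy')
          rw [← hyA]
          exact hyC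
      rw [hCker]
      exact NoriAux.card_ker_det
end
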